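/- arXiv:1404.5221 — 14 statements merged into one kernel-verified Lean document; each statement's English description precedes it below -/
import Mathlib

section
/- Let j ≥ 0 and let g_0, g_1, …, g_j be real numbers with g_j > g_{j-1} > … > g_0 > 0. Then for any real numbers v^0, v^1, …, v^{j+1}, setting Δv = Σ_{s=0}^{j} g_s (v^{s+1} − v^s) and Δ(v²) = Σ_{s=0}^{j} g_s ((v^{s+1})² − (v^s)²), one has v^{j+1} · Δv ≥ (1/2) Δ(v²) + (1/(2 g_j)) (Δv)². -/
lemma gpos_aux (g : ℕ → ℝ) (hg0 : 0 < g 0) :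
    ∀ n : ℕ, (∀ s, s < n → g s < g (s + 1)) → 0 < g n := by
  intro n
  induction n with
  | zero => intro _; exact hg0
  | succ n ih =>
    intro h
    exact lt_trans (ih (fun s hs => h s (Nat.lt_succ_of_lt hs))) (h n (Nat.lt_succ_self n))

/-- Lemma 1, first inequality (Alikhanov, L2-1_σ paper):
for increasing positive weights `g 0 < g 1 < … < g j` and any reals `v 0, …, v (j+1)`,
`v^{j+1} · Δv ≥ (1/2) Δ(v²) + (1/(2 g_j)) (Δv)²`. -/
theorem lemma1_first_inequality (j : ℕ) (g v : ℕ → ℝ)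
    (hg0 : 0 < g 0) (hgmono : ∀ s, s < j → g s < g (s + 1)) :
    v (j + 1) * (∑ s ∈ Finset.range (j + 1), g s * (v (s + 1) - v s)) ≥
      (1 / 2) * (∑ s ∈ Finset.range (j + 1), g s * ((v (s + 1)) ^ 2 - (v s) ^ 2)) +
        (1 / (2 * g j)) * (∑ s ∈ Finset.range (j + 1), g s * (v (s + 1) - v s)) ^ 2 := by
  induction j with
  | zero =>
    simp only [Finset.sum_range_one, zero_add]
    have h : (1 / (2 * g 0)) * (g 0 * (v 1 - v 0)) ^ 2 = g 0 * (v 1 - v 0) ^ 2 / 2 := by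
      field_simp
    rw [ge_iff_le, h]
    exact le_of_eq (by ring)
  | succ j ih =>
    have hmono' : ∀ s, s < j → g s < g (s + 1) := fun s hs => hgmono s (Nat.lt_succ_of_lt hs)
    have hgj : 0 < g j := gpos_aux g hg0 j hmono'
    have hlt : g j < g (j + 1) := hgmono j (Nat.lt_succ_self j)
    have hgj1 : 0 < g (j + 1) := hgj.trans hlt
    have ihj := ih hmono'
    set A := ∑ s ∈ Finset.range (j + 1), g s * (v (s + 1) - v s) with hA
    set B := ∑ s ∈ Finset.range (j + 1), g s * ((v (s + 1)) ^ 2 - (v s) ^ 2) with hB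
    have e1 : ∑ s ∈ Finset.range (j + 1 + 1), g s * (v (s + 1) - v s) =
        A + g (j + 1) * (v (j + 2) - v (j + 1)) := Finset.sum_range_succ _ _
    have e2 : ∑ s ∈ Finset.range (j + 1 + 1), g s * ((v (s + 1)) ^ 2 - (v s) ^ 2) =
        B + g (j + 1) * ((v (j + 2)) ^ 2 - (v (j + 1)) ^ 2) := Finset.sum_range_succ _ _
    rw [e1, e2]
    set c := g (j + 1)
    set u := v (j + 1)
    set w := v (j + 2)
    -- IH with weaker coefficient
    have h1 : (1 / (2 * g j)) * A ^ 2 ≥ (1 / (2 * c)) * A ^ 2 := by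
      apply mul_le_mul_of_nonneg_right _ (sq_nonneg A)
      apply one_div_le_one_div_of_le (by positivity)
      linarith
    have h2 : u * A ≥ (1 / 2) * B + (1 / (2 * c)) * A ^ 2 := le_trans (by linarith) ihj
    -- expansion identity for the squared term
    have h3 : (1 / (2 * c)) * (A + c * (w - u)) ^ 2 =
        (1 / (2 * c)) * A ^ 2 + A * (w - u) + c * (w - u) ^ 2 / 2 := by
      field_simp
      ring
    have h4 : w * (A + c * (w - u)) =
        u * A + (w - u) * A + c * w * (w - u) := by ring
    have h5 : (1 / 2) * (B + c * (w ^ 2 - u ^ 2)) =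
        (1 / 2) * B + c * w * (w - u) - c * (w - u) ^ 2 / 2 := by ring
    rw [ge_iff_le, h5, h3, h4]
    linarith
end

section
/- Let j ≥ 0 and let g_0, g_1, …, g_j be real numbers with g_j > g_{j-1} > … > g_0 > 0, and set g_{-1} = 0 in the case j = 0. Then for any real numbers v^0, v^1, …, v^{j+1}, setting Δv = Σ_{s=0}^{j} g_s (v^{s+1} − v^s) and Δ(v²) = Σ_{s=0}^{j} g_s ((v^{s+1})² − (v^s)²), one has v^{j} · Δv ≥ (1/2) Δ(v²) − (1/(2 (g_j − g_{j-1}))) (Δv)². -/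
lemma alg_core (p c a d : ℝ) (hp : 0 < p) (hc : 0 < c) :
    (d - a) ^ 2 / (p + c) ≤ a ^ 2 / p + d ^ 2 / c := by
  rw [div_add_div _ _ hp.ne' hc.ne', div_le_div_iff₀ (by linarith) (mul_pos hp hc)]
  nlinarith [sq_nonneg (c * a + p * d)]

lemma keyB (g v : ℕ → ℝ) (n : ℕ) (hn : 1 ≤ n)
    (hpos : ∀ s, s < n → 0 < g s) (hmono : ∀ s, s + 1 < n → g s ≤ g (s + 1)) :
    2 * v n * (∑ s ∈ Finset.range n, g s * (v (s + 1) - v s))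
      - ∑ s ∈ Finset.range n, g s * ((v (s + 1)) ^ 2 - (v s) ^ 2)
    ≥ (∑ s ∈ Finset.range n, g s * (v (s + 1) - v s)) ^ 2 / g (n - 1) := by
  induction n, hn using Nat.le_induction with
  | base =>
      simp only [Finset.sum_range_one]
      have h0 : 0 < g 0 := hpos 0 (by omega)
      rw [ge_iff_le, div_le_iff₀ h0]
      nlinarith [sq_nonneg (v 1 - v 0)]
  | succ n hn ih =>
      have hp : 0 < g (n - 1) := hpos (n - 1) (by omega)
      have hq : 0 < g n := hpos n (by omega)
      have hpq : g (n - 1) ≤ g n := by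
        have := hmono (n - 1) (by omega)
        rwa [Nat.sub_add_cancel hn] at this
      have IH := ih (fun s hs => hpos s (by omega)) (fun s hs => hmono s (by omega))
      set a := ∑ s ∈ Finset.range n, g s * (v (s + 1) - v s) with ha
      set S := ∑ s ∈ Finset.range n, g s * ((v (s + 1)) ^ 2 - (v s) ^ 2) with hS
      rw [Finset.sum_range_succ, Finset.sum_range_succ, ← ha, ← hS, Nat.add_sub_cancel]
      have hdivle : a ^ 2 / g n ≤ a ^ 2 / g (n - 1) := by
        apply div_le_div_of_nonneg_left (sq_nonneg a) hp hpq
      have ha' : a ^ 2 ≤ (2 * v n * a - S) * g n := by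
        have h2 : a ^ 2 / g n ≤ 2 * v n * a - S := le_trans hdivle IH
        rwa [div_le_iff₀ hq] at h2
      rw [ge_iff_le, div_le_iff₀ hq]
      nlinarith [ha']

/-- Lemma 1, second inequality (Alikhanov, L2-1_σ paper):
for increasing positive weights `g 0 < g 1 < … < g j` (with the convention `g (-1) = 0`
when `j = 0`) and any reals `v 0, …, v (j+1)`,
`v^{j} · Δv ≥ (1/2) Δ(v²) − (1/(2 (g_j − g_{j-1}))) (Δv)²`. -/
theorem lemma1_second_inequality (j : ℕ) (g v : ℕ → ℝ)
    (hg0 : 0 < g 0) (hgmono : ∀ s, s < j → g s < g (s + 1)) :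
    v j * (∑ s ∈ Finset.range (j + 1), g s * (v (s + 1) - v s)) ≥
      (1 / 2) * (∑ s ∈ Finset.range (j + 1), g s * ((v (s + 1)) ^ 2 - (v s) ^ 2)) -
        (1 / (2 * (g j - if j = 0 then 0 else g (j - 1)))) *
          (∑ s ∈ Finset.range (j + 1), g s * (v (s + 1) - v s)) ^ 2 := by
  rcases Nat.eq_zero_or_pos j with hj | hj
  · subst hj
    norm_num [Finset.sum_range_one]
    have h : (g 0)⁻¹ * (1 / 2 : ℝ) * (g 0 * (v 1 - v 0)) ^ 2 = g 0 * (v 1 - v 0) ^ 2 / 2 := by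
      field_simp
    nlinarith [h]
  · have hj0 : j ≠ 0 := by omega
    have hpos : ∀ s, s ≤ j → 0 < g s := by
      intro s
      induction s with
      | zero => exact fun _ => hg0
      | succ n ihn => exact fun h => lt_trans (ihn (by omega)) (hgmono n (by omega))
    have hp : 0 < g (j - 1) := hpos (j - 1) (by omega)
    have hgq : 0 < g j := hpos j le_rfl
    have hpq : g (j - 1) < g j := by
      have := hgmono (j - 1) (by omega)
      rwa [Nat.sub_add_cancel hj] at this
    have key := keyB g v j hj (fun s hs => hpos s hs.le)
      (fun s hs => (hgmono s (by omega)).le)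
    simp only [if_neg hj0]
    set a := ∑ s ∈ Finset.range j, g s * (v (s + 1) - v s) with ha
    set S := ∑ s ∈ Finset.range j, g s * ((v (s + 1)) ^ 2 - (v s) ^ 2) with hS
    rw [Finset.sum_range_succ, Finset.sum_range_succ, ← ha, ← hS]
    set c := g j - g (j - 1) with hc
    have hc0 : 0 < c := by rw [hc]; linarith
    set d := a + g j * (v (j + 1) - v j) with hd
    have e2 : g j * (v (j + 1) - v j) ^ 2 = (d - a) ^ 2 / g j := by
      rw [hd]
      field_simp
      ring
    have h1 : (d - a) ^ 2 / g j ≤ a ^ 2 / g (j - 1) + d ^ 2 / c := by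
      have h := alg_core (g (j - 1)) c a d hp hc0
      rwa [show g (j - 1) + c = g j by rw [hc]; ring] at h
    have e1 : v j * d - (1 / 2 : ℝ) * (S + g j * ((v (j + 1)) ^ 2 - (v j) ^ 2))
        = (1 / 2) * (2 * v j * a - S) - (1 / 2) * (g j * (v (j + 1) - v j) ^ 2) := by
      rw [hd]; ring
    have e3 : (1 / (2 * c)) * d ^ 2 = (d ^ 2 / c) / 2 := by
      field_simp
    linarith [key, h1, e1, e2, e3]
end

section
/- Let j ≥ 0 and let g_0, g_1, …, g_j be real numbers with g_j > g_{j-1} > … > g_0 > 0 (with the convention g_{-1} = 0 when j = 0), and let σ be a real number with g_j/(2 g_j − g_{j-1}) ≤ σ ≤ 1. Then for any real numbers v^0, v^1, …, v^{j+1}, setting Δv = Σ_{s=0}^{j} g_s (v^{s+1} − v^s) and Δ(v²) = Σ_{s=0}^{j} g_s ((v^{s+1})² − (v^s)²), one has (σ v^{j+1} + (1 − σ) v^{j}) · Δv ≥ (1/2) Δ(v²). -/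
/-- The increments of the weights, with the convention `g (-1) = 0`. -/
private def bb (g : ℕ → ℝ) (r : ℕ) : ℝ := g r - if r = 0 then 0 else g (r - 1)

private lemma sum_bb (g : ℕ → ℝ) (j : ℕ) :
    ∑ r ∈ Finset.range (j + 1), bb g r = g j := by
  induction j with
  | zero => simp [bb]
  | succ k ih =>
    rw [Finset.sum_range_succ, ih]
    simp [bb]

/-- Abel summation for the fractional-derivative operator. -/
private lemma abel (g f : ℕ → ℝ) (j : ℕ) :
    ∑ s ∈ Finset.range j, g s * (f (s + 1) - f s)
      = ∑ r ∈ Finset.range j, bb g r * (f j - f r) := by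
  induction j with
  | zero => simp
  | succ k ih =>
    rw [Finset.sum_range_succ, ih]
    have h1 : ∀ r ∈ Finset.range (k + 1),
        bb g r * (f (k + 1) - f r)
          = bb g r * (f k - f r) + bb g r * (f (k + 1) - f k) := fun r _ => by ring
    rw [Finset.sum_congr rfl h1, Finset.sum_add_distrib, ← Finset.sum_mul, sum_bb,
      Finset.sum_range_succ]
    ring

/-- Corollary 1 (Alikhanov, L2-1_σ paper): for increasing positive weights
`g 0 < g 1 < … < g j` (convention `g (-1) = 0` when `j = 0`) and
`g_j/(2 g_j − g_{j-1}) ≤ σ ≤ 1`, one has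
`(σ v^{j+1} + (1 − σ) v^{j}) · Δv ≥ (1/2) Δ(v²)`. -/
theorem corollary1 (j : ℕ) (g v : ℕ → ℝ) (σ : ℝ)
    (hg0 : 0 < g 0) (hgmono : ∀ s, s < j → g s < g (s + 1))
    (hσl : g j / (2 * g j - if j = 0 then 0 else g (j - 1)) ≤ σ) (hσu : σ ≤ 1) :
    (σ * v (j + 1) + (1 - σ) * v j) *
        (∑ s ∈ Finset.range (j + 1), g s * (v (s + 1) - v s)) ≥
      (1 / 2) * (∑ s ∈ Finset.range (j + 1), g s * ((v (s + 1)) ^ 2 - (v s) ^ 2)) := by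
  have hgpos : ∀ s, s ≤ j → 0 < g s := by
    intro s hs
    induction s with
    | zero => exact hg0
    | succ k ih => exact (ih (by omega)).trans (hgmono k (by omega))
  set g' : ℝ := if j = 0 then 0 else g (j - 1) with hg'
  have hg'nonneg : 0 ≤ g' := by
    rw [hg']
    split
    · exact le_rfl
    · exact (hgpos (j - 1) (by omega)).le
  have hg'lt : g' < g j := by
    rw [hg']
    split
    · next h => rw [h]; exact hg0
    · next h =>
      have := hgmono (j - 1) (by omega)
      have hj : j - 1 + 1 = j := by omega
      rwa [hj] at this
  have hden : 0 < 2 * g j - g' := by linarith [hgpos j le_rfl]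
  have h1 : g j ≤ σ * (2 * g j - g') := by
    rw [div_le_iff₀ hden] at hσl
    linarith
  have hσ0 : 0 ≤ σ := by nlinarith [hgpos j le_rfl]
  have hc : 0 ≤ (2 * σ - 1) * (g j - g') - (1 - σ) ^ 2 * g' := by
    nlinarith [mul_nonneg (mul_nonneg hσ0 hg'nonneg) (sub_nonneg.2 hσu)]
  have hbpos : ∀ r, r ≤ j → 0 < bb g r := by
    intro r hr
    unfold bb
    split
    · next h => rw [h]; simpa using hg0
    · next h =>
      have := hgmono (r - 1) (by omega)
      have hr1 : r - 1 + 1 = r := by omega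
      rw [hr1] at this
      linarith
  set d : ℝ := v (j + 1) - v j with hd
  set w : ℝ := σ * v (j + 1) + (1 - σ) * v j with hw
  have hbbj : bb g j = g j - g' := by rw [hg']; rfl
  have hG : ∑ r ∈ Finset.range j, bb g r = g' := by
    cases j with
    | zero => simp [hg']
    | succ k => rw [sum_bb]; simp [hg']
  have key : 2 * w * (∑ s ∈ Finset.range (j + 1), g s * (v (s + 1) - v s))
      - (∑ s ∈ Finset.range (j + 1), g s * ((v (s + 1)) ^ 2 - (v s) ^ 2))
      = ∑ r ∈ Finset.range (j + 1),
          bb g r * ((v (j + 1) - v r) ^ 2 - 2 * (1 - σ) * d * (v (j + 1) - v r)) := by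
    have hA := abel g v (j + 1)
    have hB := abel g (fun s => (v s) ^ 2) (j + 1)
    rw [hA, hB, Finset.mul_sum, ← Finset.sum_sub_distrib]
    refine Finset.sum_congr rfl fun r _ => by rw [hw, hd]; ring
  have hlow : ∀ r ∈ Finset.range j,
      -(bb g r * ((1 - σ) * d) ^ 2)
        ≤ bb g r * ((v (j + 1) - v r) ^ 2 - 2 * (1 - σ) * d * (v (j + 1) - v r)) := by
    intro r hr
    have hb := hbpos r (by simp at hr; omega)
    nlinarith [mul_nonneg hb.le (sq_nonneg ((v (j + 1) - v r) - (1 - σ) * d))]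
  have hsum : -(g' * ((1 - σ) * d) ^ 2)
      ≤ ∑ r ∈ Finset.range j,
          bb g r * ((v (j + 1) - v r) ^ 2 - 2 * (1 - σ) * d * (v (j + 1) - v r)) := by
    have := Finset.sum_le_sum hlow
    have heq : ∑ r ∈ Finset.range j, -(bb g r * ((1 - σ) * d) ^ 2)
        = -(g' * ((1 - σ) * d) ^ 2) := by
      rw [Finset.sum_neg_distrib, ← Finset.sum_mul, hG]
    linarith [heq ▸ this]
  have hlast : bb g j * ((v (j + 1) - v j) ^ 2 - 2 * (1 - σ) * d * (v (j + 1) - v j))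
      = (g j - g') * (2 * σ - 1) * d ^ 2 := by
    rw [hbbj, hd]; ring
  have main : 0 ≤ 2 * w * (∑ s ∈ Finset.range (j + 1), g s * (v (s + 1) - v s))
      - (∑ s ∈ Finset.range (j + 1), g s * ((v (s + 1)) ^ 2 - (v s) ^ 2)) := by
    rw [key, Finset.sum_range_succ, hlast]
    nlinarith [mul_nonneg hc (sq_nonneg d), hsum]
  rw [ge_iff_le]
  clear_value w d
  linarith [main]
end

section
/- Consider the general difference scheme: grid functions y^0, y^1, …, y^M in the space V of real vectors (y_0, …, y_N) with y_0 = y_N = 0, weights g_s^{j+1} (0 ≤ s ≤ j ≤ M−1) satisfying g_j^{j+1} > g_{j-1}^{j+1} > … > g_0^{j+1} ≥ c₂ > 0 for each j, parameters σ_{j+1} with g_j^{j+1}/(2 g_j^{j+1} − g_{j-1}^{j+1}) ≤ σ_{j+1} ≤ 1 (with g_{-1}^{1} = 0), a linear operator Λ : V → V with (−Λ y, y) ≥ κ ‖y‖₀² for some κ > 0 and all y ∈ V, and source terms φ^{1}, …, φ^{M} ∈ V. Suppose that for every j = 0, …, M−1 the equation Σ_{s=0}^{j} (y^{s+1} − y^s)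 g_s^{j+1} = Λ(σ_{j+1} y^{j+1} + (1 − σ_{j+1}) y^{j}) + φ^{j+1} holds in V. Then for every j with 0 ≤ j ≤ M−1, ‖y^{j+1}‖₀² ≤ ‖y^0‖₀² + (1/(2 κ c₂)) · max_{1 ≤ k ≤ M} ‖φ^{k}‖₀². In particular the scheme is unconditionally stable. -/
/-- The discrete inner product `(u, w) = Σ_{i=1}^{N-1} u_i w_i h` on grid functions. -/
noncomputable def gridInner (h : ℝ) (N : ℕ) (u w : ℕ → ℝ) : ℝ :=
  ∑ i ∈ Finset.Ico 1 N, u i * w i * h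


/-- Abel summation in "increasing" form. -/
lemma abel_sum (g b : ℕ → ℝ) (j : ℕ) :
    ∑ s ∈ Finset.range (j+1), g s * (b (s+1) - b s)
      = g j * b (j+1) - g 0 * b 0 - ∑ s ∈ Finset.range j, (g (s+1) - g s) * b (s+1) := by
  induction j with
  | zero => simp; ring
  | succ n ih =>
    rw [Finset.sum_range_succ, ih, Finset.sum_range_succ]
    ring

/-- monotone chain: c₂ ≤ g s for s ≤ j. -/
lemma mono_chain (g : ℕ → ℝ) (c₂ : ℝ) (j : ℕ) (hg0 : c₂ ≤ g 0)
    (hmono : ∀ s < j, g s < g (s+1)) : ∀ s ≤ j, c₂ ≤ g s := by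
  intro s hs
  induction s with
  | zero => exact hg0
  | succ n ih =>
    exact le_trans (ih (by omega)) (le_of_lt (hmono n (by omega)))

/-- Scalar version of Alikhanov's Lemma 1. -/
lemma scalar_key (j : ℕ) (g : ℕ → ℝ) (σ c₂ : ℝ) (hc₂ : 0 < c₂)
    (hmono : ∀ s < j, g s < g (s+1)) (hg0 : c₂ ≤ g 0)
    (hσl : g j / (2 * g j - if j = 0 then 0 else g (j-1)) ≤ σ) (hσu : σ ≤ 1)
    (y : ℕ → ℝ) :
    (1/2) * ∑ s ∈ Finset.range (j+1), g s * (y (s+1) * y (s+1) - y s * y s)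
      ≤ (∑ s ∈ Finset.range (j+1), (y (s+1) - y s) * g s) * (σ * y (j+1) + (1-σ) * y j) := by
  have hgc : ∀ s ≤ j, c₂ ≤ g s := mono_chain g c₂ j hg0 hmono
  set R : ℕ → ℝ := fun s => y j - y s + σ * (y (j+1) - y j) with hR
  have hdiff : (∑ s ∈ Finset.range (j+1), (y (s+1) - y s) * g s) * (σ * y (j+1) + (1-σ) * y j)
      - (1/2) * ∑ s ∈ Finset.range (j+1), g s * (y (s+1) * y (s+1) - y s * y s)
      = (1/2) * ∑ s ∈ Finset.range (j+1), g s * (R s * R s - R (s+1) * R (s+1)) := by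
    rw [Finset.sum_mul, Finset.mul_sum, Finset.mul_sum, ← Finset.sum_sub_distrib]
    refine Finset.sum_congr rfl fun s _ => ?_
    simp only [hR]
    ring
  have habel : ∑ s ∈ Finset.range (j+1), g s * (R s * R s - R (s+1) * R (s+1))
      = g 0 * (R 0 * R 0) + ∑ s ∈ Finset.range j, (g (s+1) - g s) * (R (s+1) * R (s+1))
        - g j * (R (j+1) * R (j+1)) := by
    have h1 : ∑ s ∈ Finset.range (j+1), g s * (R s * R s - R (s+1) * R (s+1))
        = -∑ s ∈ Finset.range (j+1), g s * ((fun t => R t * R t) (s+1) - (fun t => R t * R t) s) := by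
      rw [← Finset.sum_neg_distrib]
      exact Finset.sum_congr rfl fun s _ => by ring
    rw [h1, abel_sum g (fun s => R s * R s) j]
    ring
  rcases Nat.eq_zero_or_pos j with hj0 | hjpos
  · subst hj0
    have hg0p : 0 < g 0 := lt_of_lt_of_le hc₂ hg0
    have hσhalf : (1:ℝ)/2 ≤ σ := by
      have h2 : g 0 / (2 * g 0 - 0) ≤ σ := by simpa using hσl
      have h3 : g 0 / (2 * g 0 - 0) = 1/2 := by
        rw [sub_zero]; field_simp
      linarith [h3 ▸ h2]
    have hR0 : R 0 = σ * (y 1 - y 0) := by simp only [hR]; ring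
    have hR1 : R 1 = (σ - 1) * (y 1 - y 0) := by simp only [hR]; ring
    have hsum : 0 ≤ ∑ s ∈ Finset.range 1, g s * (R s * R s - R (s+1) * R (s+1)) := by
      rw [Finset.sum_range_one, hR0, hR1]
      nlinarith [mul_nonneg (mul_nonneg hg0p.le (by linarith : (0:ℝ) ≤ 2*σ - 1))
        (sq_nonneg (y 1 - y 0))]
    linarith [hdiff, hsum]
  · obtain ⟨m, rfl⟩ : ∃ m, j = m + 1 := ⟨j - 1, by omega⟩
    have hgm : g m < g (m+1) := hmono m (by omega)
    have hgm1 : c₂ ≤ g (m+1) := hgc (m+1) le_rfl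
    have hgmc : c₂ ≤ g m := hgc m (by omega)
    have hD : 0 < 2 * g (m+1) - g m := by linarith
    have hσl' : g (m+1) / (2 * g (m+1) - g m) ≤ σ := by simpa using hσl
    have hσD : g (m+1) ≤ σ * (2 * g (m+1) - g m) := by
      rw [div_le_iff₀ hD] at hσl'; linarith [hσl']
    have hσ0 : 0 ≤ σ := le_trans (le_of_lt (div_pos (by linarith) hD)) hσl'
    have hcoef : 0 ≤ (2*σ - 1) * g (m+1) - σ^2 * g m := by
      nlinarith [mul_nonneg (mul_nonneg hσ0 (by linarith : (0:ℝ) ≤ 1 - σ)) (by linarith : (0:ℝ) ≤ g m)]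
    have hRj : R (m+1) = σ * (y (m+2) - y (m+1)) := by simp only [hR]; ring
    have hRj1 : R (m+2) = (σ - 1) * (y (m+2) - y (m+1)) := by simp only [hR]; ring
    have hmid : 0 ≤ ∑ s ∈ Finset.range m, (g (s+1) - g s) * (R (s+1) * R (s+1)) := by
      refine Finset.sum_nonneg fun s hs => ?_
      have hs' : s < m := Finset.mem_range.mp hs
      exact mul_nonneg (by linarith [hmono s (by omega)]) (mul_self_nonneg _)
    have hsum : 0 ≤ ∑ s ∈ Finset.range (m+1+1), g s * (R s * R s - R (s+1) * R (s+1)) := by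
      rw [habel, Finset.sum_range_succ, hRj, hRj1]
      have h1 : 0 ≤ g 0 * (R 0 * R 0) := mul_nonneg (by linarith) (mul_self_nonneg _)
      nlinarith [hmid, h1, mul_nonneg hcoef (sq_nonneg (y (m+2) - y (m+1)))]
    linarith [hdiff, hsum]

/-- Theorem 1 (Alikhanov, L2-1_σ paper): stability of the general difference scheme.
If `g_j^{j+1} > … > g_0^{j+1} ≥ c₂ > 0`, `g_j^{j+1}/(2g_j^{j+1} − g_{j-1}^{j+1}) ≤ σ_{j+1} ≤ 1`
(with `g_{-1}^1 = 0`), `Λ` is linear with `(−Λy, y) ≥ κ‖y‖₀²`, `κ > 0`, and the scheme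
`Σ_{s=0}^{j} (y^{s+1} − y^s) g_s^{j+1} = Λ(σ_{j+1} y^{j+1} + (1 − σ_{j+1}) y^j) + φ^{j+1}` holds,
then `‖y^{j+1}‖₀² ≤ ‖y^0‖₀² + (1/(2κc₂)) max_{1≤k≤M} ‖φ^k‖₀²`. -/
theorem theorem1_stability (l h κ c₂ : ℝ) (N M : ℕ)
    (hN : 0 < N) (hM : 0 < M) (hl : 0 < l) (hh : h = l / N)
    (hκ : 0 < κ) (hc₂ : 0 < c₂)
    (g : ℕ → ℕ → ℝ) (σ : ℕ → ℝ) (y φ : ℕ → ℕ → ℝ)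
    (Λ : (ℕ → ℝ) → (ℕ → ℝ)) (hΛ : IsLinearMap ℝ Λ)
    (hΛpos : ∀ u : ℕ → ℝ, u 0 = 0 → u N = 0 →
      gridInner h N (fun i => -(Λ u i)) u ≥ κ * gridInner h N u u)
    (hgmono : ∀ j < M, ∀ s < j, g j s < g j (s + 1))
    (hg0 : ∀ j < M, c₂ ≤ g j 0)
    (hσl : ∀ j < M, g j j / (2 * g j j - if j = 0 then 0 else g j (j - 1)) ≤ σ j)
    (hσu : ∀ j < M, σ j ≤ 1)
    (hbc : ∀ j ≤ M, y j 0 = 0 ∧ y j N = 0)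
    (hscheme : ∀ j < M, ∀ i, 1 ≤ i → i < N →
      ∑ s ∈ Finset.range (j + 1), (y (s + 1) i - y s i) * g j s =
        Λ (fun x => σ j * y (j + 1) x + (1 - σ j) * y j x) i + φ (j + 1) i) :
    ∀ j < M, gridInner h N (y (j + 1)) (y (j + 1)) ≤
      gridInner h N (y 0) (y 0) + (1 / (2 * κ * c₂)) *
        (Finset.Icc 1 M).sup' (Finset.nonempty_Icc.mpr hM)
          (fun k => gridInner h N (φ k) (φ k)) := by
  have hNpos : (0:ℝ) < (N:ℝ) := by exact_mod_cast hN
  have hh0 : 0 < h := by rw [hh]; positivity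
  set F := (Finset.Icc 1 M).sup' (Finset.nonempty_Icc.mpr hM)
      (fun k => gridInner h N (φ k) (φ k)) with hF
  have hinn_nonneg : ∀ u : ℕ → ℝ, 0 ≤ gridInner h N u u := fun u =>
    Finset.sum_nonneg fun i _ => mul_nonneg (mul_self_nonneg _) hh0.le
  have hF0 : 0 ≤ F := by
    rw [hF]
    exact le_trans (hinn_nonneg (φ 1)) (Finset.le_sup'
      (fun k => gridInner h N (φ k) (φ k)) (Finset.mem_Icc.mpr ⟨le_refl 1, hM⟩))
  have hκ0 : κ ≠ 0 := ne_of_gt hκ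
  -- per time-step energy estimate
  have step : ∀ jj, jj < M →
      ∑ s ∈ Finset.range (jj+1), g jj s *
        (gridInner h N (y (s+1)) (y (s+1)) - gridInner h N (y s) (y s))
      ≤ (1/(2*κ)) * F := by
    intro jj hjj
    have hu0 : (fun i => σ jj * y (jj+1) i + (1 - σ jj) * y jj i) 0 = 0 := by
      simp [(hbc jj (by omega)).1, (hbc (jj+1) (by omega)).1]
    have huN : (fun i => σ jj * y (jj+1) i + (1 - σ jj) * y jj i) N = 0 := by
      simp [(hbc jj (by omega)).2, (hbc (jj+1) (by omega)).2]
    have hΛv := hΛpos (fun i => σ jj * y (jj+1) i + (1 - σ jj) * y jj i) hu0 huN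
    have hΛv' : gridInner h N (Λ (fun i => σ jj * y (jj+1) i + (1 - σ jj) * y jj i))
        (fun i => σ jj * y (jj+1) i + (1 - σ jj) * y jj i)
        ≤ -(κ * gridInner h N (fun i => σ jj * y (jj+1) i + (1 - σ jj) * y jj i)
            (fun i => σ jj * y (jj+1) i + (1 - σ jj) * y jj i)) := by
      have hneg : gridInner h N
          (fun i => -(Λ (fun i => σ jj * y (jj+1) i + (1 - σ jj) * y jj i) i))
          (fun i => σ jj * y (jj+1) i + (1 - σ jj) * y jj i)
          = - gridInner h N (Λ (fun i => σ jj * y (jj+1) i + (1 - σ jj) * y jj i))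
              (fun i => σ jj * y (jj+1) i + (1 - σ jj) * y jj i) := by
        simp [gridInner, neg_mul, Finset.sum_neg_distrib]
      rw [hneg] at hΛv
      linarith
    have hφv : gridInner h N (φ (jj+1)) (fun i => σ jj * y (jj+1) i + (1 - σ jj) * y jj i)
        ≤ κ * gridInner h N (fun i => σ jj * y (jj+1) i + (1 - σ jj) * y jj i)
            (fun i => σ jj * y (jj+1) i + (1 - σ jj) * y jj i)
          + (1/(4*κ)) * gridInner h N (φ (jj+1)) (φ (jj+1)) := by
      simp only [gridInner, Finset.mul_sum, ← Finset.sum_add_distrib]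
      refine Finset.sum_le_sum fun i _ => ?_
      have key : φ (jj+1) i * (σ jj * y (jj+1) i + (1 - σ jj) * y jj i)
          ≤ κ * ((σ jj * y (jj+1) i + (1 - σ jj) * y jj i) * (σ jj * y (jj+1) i + (1 - σ jj) * y jj i))
            + (1/(4*κ)) * (φ (jj+1) i * φ (jj+1) i) := by
        rw [← sub_nonneg]
        have hid : κ * ((σ jj * y (jj+1) i + (1 - σ jj) * y jj i) * (σ jj * y (jj+1) i + (1 - σ jj) * y jj i))
            + (1/(4*κ)) * (φ (jj+1) i * φ (jj+1) i)
            - φ (jj+1) i * (σ jj * y (jj+1) i + (1 - σ jj) * y jj i)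
            = (1/(4*κ)) * (2*κ*(σ jj * y (jj+1) i + (1 - σ jj) * y jj i) - φ (jj+1) i)^2 := by
          field_simp
          ring
        rw [hid]
        positivity
      calc φ (jj+1) i * (σ jj * y (jj+1) i + (1 - σ jj) * y jj i) * h
          ≤ (κ * ((σ jj * y (jj+1) i + (1 - σ jj) * y jj i) * (σ jj * y (jj+1) i + (1 - σ jj) * y jj i))
              + (1/(4*κ)) * (φ (jj+1) i * φ (jj+1) i)) * h :=
            mul_le_mul_of_nonneg_right key hh0.le
        _ = κ * ((σ jj * y (jj+1) i + (1 - σ jj) * y jj i) * (σ jj * y (jj+1) i + (1 - σ jj) * y jj i) * h)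
              + 1/(4*κ) * (φ (jj+1) i * φ (jj+1) i * h) := by ring
    have hswap : ∑ s ∈ Finset.range (jj+1), g jj s *
          (gridInner h N (y (s+1)) (y (s+1)) - gridInner h N (y s) (y s))
        = ∑ i ∈ Finset.Ico 1 N, (∑ s ∈ Finset.range (jj+1),
            g jj s * (y (s+1) i * y (s+1) i - y s i * y s i)) * h := by
      calc ∑ s ∈ Finset.range (jj+1), g jj s *
              (gridInner h N (y (s+1)) (y (s+1)) - gridInner h N (y s) (y s))
          = ∑ s ∈ Finset.range (jj+1), ∑ i ∈ Finset.Ico 1 N,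
              g jj s * (y (s+1) i * y (s+1) i - y s i * y s i) * h := by
            refine Finset.sum_congr rfl fun s _ => ?_
            simp only [gridInner, ← Finset.sum_sub_distrib, Finset.mul_sum]
            exact Finset.sum_congr rfl fun i _ => by ring
        _ = ∑ i ∈ Finset.Ico 1 N, ∑ s ∈ Finset.range (jj+1),
              g jj s * (y (s+1) i * y (s+1) i - y s i * y s i) * h := Finset.sum_comm
        _ = ∑ i ∈ Finset.Ico 1 N, (∑ s ∈ Finset.range (jj+1),
              g jj s * (y (s+1) i * y (s+1) i - y s i * y s i)) * h := by
            refine Finset.sum_congr rfl fun i _ => ?_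
            rw [Finset.sum_mul]
    have hkey : (1/2) * ∑ s ∈ Finset.range (jj+1), g jj s *
          (gridInner h N (y (s+1)) (y (s+1)) - gridInner h N (y s) (y s))
        ≤ gridInner h N (Λ (fun x => σ jj * y (jj+1) x + (1 - σ jj) * y jj x))
            (fun i => σ jj * y (jj+1) i + (1 - σ jj) * y jj i)
          + gridInner h N (φ (jj+1)) (fun i => σ jj * y (jj+1) i + (1 - σ jj) * y jj i) := by
      rw [hswap, Finset.mul_sum]
      have hsplit : gridInner h N (Λ (fun x => σ jj * y (jj+1) x + (1 - σ jj) * y jj x))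
            (fun i => σ jj * y (jj+1) i + (1 - σ jj) * y jj i)
          + gridInner h N (φ (jj+1)) (fun i => σ jj * y (jj+1) i + (1 - σ jj) * y jj i)
          = ∑ i ∈ Finset.Ico 1 N,
              (Λ (fun x => σ jj * y (jj+1) x + (1 - σ jj) * y jj x) i
                  * (σ jj * y (jj+1) i + (1 - σ jj) * y jj i) * h
                + φ (jj+1) i * (σ jj * y (jj+1) i + (1 - σ jj) * y jj i) * h) := by
        simp only [gridInner, ← Finset.sum_add_distrib]
      rw [hsplit]
      refine Finset.sum_le_sum fun i hi => ?_
      rw [Finset.mem_Ico] at hi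
      have hsc := scalar_key jj (g jj) (σ jj) c₂ hc₂ (fun s hs => hgmono jj hjj s hs)
        (hg0 jj hjj) (hσl jj hjj) (hσu jj hjj) (fun t => y t i)
      rw [hscheme jj hjj i hi.1 hi.2] at hsc
      calc (1/2) * ((∑ s ∈ Finset.range (jj+1),
              g jj s * (y (s+1) i * y (s+1) i - y s i * y s i)) * h)
          = ((1/2) * ∑ s ∈ Finset.range (jj+1),
              g jj s * (y (s+1) i * y (s+1) i - y s i * y s i)) * h := by ring
        _ ≤ ((Λ (fun x => σ jj * y (jj+1) x + (1 - σ jj) * y jj x) i + φ (jj+1) i)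
              * (σ jj * y (jj+1) i + (1 - σ jj) * y jj i)) * h :=
            mul_le_mul_of_nonneg_right hsc hh0.le
        _ = Λ (fun x => σ jj * y (jj+1) x + (1 - σ jj) * y jj x) i
              * (σ jj * y (jj+1) i + (1 - σ jj) * y jj i) * h
            + φ (jj+1) i * (σ jj * y (jj+1) i + (1 - σ jj) * y jj i) * h := by ring
    have hGF : gridInner h N (φ (jj+1)) (φ (jj+1)) ≤ F := by
      rw [hF]
      exact Finset.le_sup' (fun k => gridInner h N (φ k) (φ k))
        (Finset.mem_Icc.mpr ⟨by omega, by omega⟩)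
    have h4 : (0:ℝ) ≤ 1/(4*κ) := by positivity
    have h24 : (1:ℝ)/(2*κ) = 2 * (1/(4*κ)) := by field_simp; ring
    have hhalf : (1/2) * ∑ s ∈ Finset.range (jj+1), g jj s *
          (gridInner h N (y (s+1)) (y (s+1)) - gridInner h N (y s) (y s))
        ≤ (1/(4*κ)) * F := by
      have := mul_le_mul_of_nonneg_left hGF h4
      linarith [hkey, hΛv', hφv]
    rw [h24]
    linarith
  -- induction on time level
  have claim : ∀ t, t ≤ M → gridInner h N (y t) (y t)
      ≤ gridInner h N (y 0) (y 0) + (1/(2*κ*c₂)) * F := by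
    intro t
    induction t using Nat.strong_induction_on with
    | _ t IH =>
      intro ht
      match t, IH with
      | 0, _ =>
        have : 0 ≤ (1/(2*κ*c₂)) * F := mul_nonneg (by positivity) hF0
        linarith
      | (j'+1), IH =>
        have hj' : j' < M := by omega
        have hstep := step j' hj'
        have habel := abel_sum (g j') (fun t => gridInner h N (y t) (y t)) j'
        have hmid : ∑ s ∈ Finset.range j', (g j' (s+1) - g j' s)
              * (gridInner h N (y (s+1)) (y (s+1)))
            ≤ (g j' j' - g j' 0) * (gridInner h N (y 0) (y 0) + (1/(2*κ*c₂)) * F) := by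
          calc ∑ s ∈ Finset.range j', (g j' (s+1) - g j' s)
                * (gridInner h N (y (s+1)) (y (s+1)))
              ≤ ∑ s ∈ Finset.range j', (g j' (s+1) - g j' s)
                * (gridInner h N (y 0) (y 0) + (1/(2*κ*c₂)) * F) := by
                refine Finset.sum_le_sum fun s hs => ?_
                have hs' : s < j' := Finset.mem_range.mp hs
                have hcoef : 0 ≤ g j' (s+1) - g j' s := by
                  linarith [hgmono j' hj' s hs']
                exact mul_le_mul_of_nonneg_left (IH (s+1) (by omega) (by omega)) hcoef
            _ = (g j' j' - g j' 0) * (gridInner h N (y 0) (y 0) + (1/(2*κ*c₂)) * F) := by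
                rw [← Finset.sum_mul, Finset.sum_range_sub (g j')]
        have hgjj : 0 < g j' j' :=
          lt_of_lt_of_le hc₂ (mono_chain (g j') c₂ j' (hg0 j' hj')
            (fun s hs => hgmono j' hj' s hs) j' le_rfl)
        have hg00 : c₂ ≤ g j' 0 := hg0 j' hj'
        have hrelF : c₂ * ((1/(2*κ*c₂)) * F) = (1/(2*κ)) * F := by
          field_simp
        have hc : 0 ≤ (g j' 0 - c₂) * ((1/(2*κ*c₂)) * F) :=
          mul_nonneg (by linarith) (mul_nonneg (by positivity) hF0)
        have hfin : g j' j' * gridInner h N (y (j'+1)) (y (j'+1))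
            ≤ g j' j' * (gridInner h N (y 0) (y 0) + (1/(2*κ*c₂)) * F) := by
          nlinarith [hstep, hmid, habel, hrelF, hc]
        exact le_of_mul_le_mul_left hfin hgjj
  intro j hj
  exact claim (j+1) (by omega)
end

section
/- For every α with 0 < α < 1, every x > 0 and every z with 0 < z < 1, one has z < ((z + x)^{1−α} − x^{1−α}) / ((1 + x)^{1−α} − x^{1−α}) < z^{1−α}. -/
open Real Set

private lemma phi_strictAnti (β z : ℝ) (hβ0 : 0 < β) (hβ1 : β < 1) (hz0 : 0 < z) :
    StrictAntiOn (fun t : ℝ => (z + t) ^ β - t ^ β) (Ioi 0) := by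
  apply strictAntiOn_of_deriv_neg (convex_Ioi 0)
  · apply ContinuousOn.sub
    · apply ContinuousOn.rpow_const (by fun_prop)
      intro t ht
      have ht' : 0 < t := ht
      exact Or.inl (by positivity)
    · apply ContinuousOn.rpow_const (by fun_prop)
      intro t ht
      exact Or.inr hβ0.le
  · intro t ht
    rw [interior_Ioi, mem_Ioi] at ht
    have h1 : HasDerivAt (fun t : ℝ => (z + t) ^ β) (1 * β * (z + t) ^ (β - 1)) t :=
      HasDerivAt.rpow_const ((hasDerivAt_id t).const_add z) (Or.inl (by positivity))
    have h2 : HasDerivAt (fun t : ℝ => t ^ β) (1 * β * t ^ (β - 1)) t :=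
      HasDerivAt.rpow_const (hasDerivAt_id t) (Or.inl (ne_of_gt ht))
    rw [(show HasDerivAt (fun t : ℝ => (z + t) ^ β - t ^ β) _ t from h1.sub h2).deriv]
    have : (z + t) ^ (β - 1) < t ^ (β - 1) :=
      Real.rpow_lt_rpow_of_neg ht (by linarith) (by linarith)
    nlinarith

/-- Inequality (4.101) in Lemma 3 (Alikhanov, L2-1_σ paper): for `0 < α < 1`, `x > 0`,
`0 < z < 1`, one has `z < ((z+x)^{1−α} − x^{1−α}) / ((1+x)^{1−α} − x^{1−α}) < z^{1−α}`. -/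
theorem g_alpha_bounds (α x z : ℝ) (hα0 : 0 < α) (hα1 : α < 1)
    (hx : 0 < x) (hz0 : 0 < z) (hz1 : z < 1) :
    z < ((z + x) ^ (1 - α) - x ^ (1 - α)) / ((1 + x) ^ (1 - α) - x ^ (1 - α)) ∧
      ((z + x) ^ (1 - α) - x ^ (1 - α)) / ((1 + x) ^ (1 - α) - x ^ (1 - α)) < z ^ (1 - α) := by
  set β := 1 - α with hβ
  have hβ0 : 0 < β := by simp [hβ]; linarith
  have hβ1 : β < 1 := by simp [hβ]; linarith
  have hD : (0:ℝ) < (1 + x) ^ β - x ^ β :=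
    sub_pos.2 (Real.rpow_lt_rpow hx.le (by linarith) hβ0)
  constructor
  · rw [lt_div_iff₀ hD]
    have sc := (Real.strictConcaveOn_rpow hβ0 hβ1).2
      (mem_Ici.mpr (by linarith : (0:ℝ) ≤ 1 + x)) (mem_Ici.mpr hx.le)
      (by intro h; linarith : (1 + x : ℝ) ≠ x) hz0
      (by linarith : (0:ℝ) < 1 - z) (by ring : z + (1 - z) = 1)
    have hpt : z • (1 + x) + (1 - z) • x = z + x := by simp; ring
    rw [hpt] at sc
    simp only [smul_eq_mul] at sc
    nlinarith
  · rw [div_lt_iff₀ hD]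
    have key : (z + x) ^ β - x ^ β < (z + z * x) ^ β - (z * x) ^ β :=
      phi_strictAnti β z hβ0 hβ1 hz0 (mem_Ioi.2 (by positivity)) (mem_Ioi.2 hx)
        (by nlinarith)
    have h1 : (z + z * x) ^ β = z ^ β * (1 + x) ^ β := by
      rw [← Real.mul_rpow hz0.le (by linarith)]; ring_nf
    have h2 : (z * x) ^ β = z ^ β * x ^ β := Real.mul_rpow hz0.le hx.le
    nlinarith
end

section
/- For every α with 0 < α < 1 and every x > 0, the function f_α(x) = ((x+1)^{2−α} − x^{2−α} − (2−α) x^{1−α}) / ((2−α)((x+1)^{1−α} − x^{1−α})) satisfies 1/2 < f_α(x) < 1/(2−α). -/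
open intervalIntegral Set

/-- Lemma 3 (Alikhanov, L2-1_σ paper), function form: for `0 < α < 1` and `x > 0`,
`1/2 < f_α(x) < 1/(2−α)` where
`f_α(x) = ((x+1)^{2−α} − x^{2−α} − (2−α) x^{1−α}) / ((2−α)((x+1)^{1−α} − x^{1−α}))`. -/
theorem f_alpha_bounds (α x : ℝ) (hα0 : 0 < α) (hα1 : α < 1) (hx : 0 < x) :
    1 / 2 < ((x + 1) ^ (2 - α) - x ^ (2 - α) - (2 - α) * x ^ (1 - α)) /
        ((2 - α) * ((x + 1) ^ (1 - α) - x ^ (1 - α))) ∧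
      ((x + 1) ^ (2 - α) - x ^ (2 - α) - (2 - α) * x ^ (1 - α)) /
        ((2 - α) * ((x + 1) ^ (1 - α) - x ^ (1 - α))) < 1 / (2 - α) := by
  have hx1 : (0:ℝ) < x + 1 := by linarith
  have hβ : 0 < 1 - α := by linarith
  have hβ1 : 1 - α < 1 := by linarith
  have hp : (0:ℝ) < 2 - α := by linarith
  have hD' : x ^ (1 - α) < (x + 1) ^ (1 - α) :=
    Real.rpow_lt_rpow hx.le (lt_add_one x) hβ
  have hD : 0 < (2 - α) * ((x + 1) ^ (1 - α) - x ^ (1 - α)) := by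
    apply mul_pos hp; linarith
  -- continuity facts
  have hc1 : ContinuousOn (fun t : ℝ => t ^ (1 - α)) (Icc x (x + 1)) := fun t ht =>
    (Real.continuousAt_rpow_const t (1 - α) (Or.inl (by linarith [ht.1]))).continuousWithinAt
  have hc2 : ContinuousOn (fun t : ℝ => t ^ (-α)) (Icc x (x + 1)) := fun t ht =>
    (Real.continuousAt_rpow_const t (-α) (Or.inl (by linarith [ht.1]))).continuousWithinAt
  -- integral values via FTC
  have hI1 : (∫ t in x..(x + 1), t ^ (1 - α)) =
      ((x + 1) ^ (2 - α) - x ^ (2 - α)) / (2 - α) := by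
    rw [integral_rpow (Or.inl (by linarith))]
    ring_nf
  have hI2 : (∫ t in x..(x + 1), t ^ (-α)) =
      ((x + 1) ^ (1 - α) - x ^ (1 - α)) / (1 - α) := by
    rw [integral_rpow (Or.inl (by linarith))]
    ring_nf
  constructor
  · -- lower bound: trapezoid < integral by concavity
    have key : (∫ t in x..(x + 1),
        ((x + 1 - t) * x ^ (1 - α) + (t - x) * (x + 1) ^ (1 - α))) <
        ∫ t in x..(x + 1), t ^ (1 - α) := by
      apply integral_lt_integral_of_continuousOn_of_le_of_exists_lt (lt_add_one x)
      · exact (Continuous.continuousOn (by continuity))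
      · exact hc1
      · intro t ht
        have hcc := (Real.concaveOn_rpow hβ.le hβ1.le).2
          (Set.mem_Ici.mpr hx.le) (Set.mem_Ici.mpr hx1.le)
          (show (0:ℝ) ≤ x + 1 - t by linarith [ht.2])
          (show (0:ℝ) ≤ t - x by linarith [ht.1])
          (show (x + 1 - t) + (t - x) = 1 by ring)
        have harg : (x + 1 - t) • x + (t - x) • (x + 1) = t := by
          rw [smul_eq_mul, smul_eq_mul]; ring
        rw [harg] at hcc
        simp only [smul_eq_mul] at hcc
        linarith
      · refine ⟨x + 1/2, ⟨by linarith, by linarith⟩, ?_⟩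
        have hs := (Real.strictConcaveOn_rpow hβ hβ1).2
          (Set.mem_Ici.mpr hx.le) (Set.mem_Ici.mpr hx1.le)
          (by norm_num : x ≠ x + 1)
          (by norm_num : (0:ℝ) < 1/2) (by norm_num : (0:ℝ) < 1/2) (by norm_num)
        have harg : (1/2 : ℝ) • x + (1/2 : ℝ) • (x + 1) = x + 1/2 := by
          rw [smul_eq_mul, smul_eq_mul]; ring
        rw [harg] at hs
        simp only [smul_eq_mul] at hs
        linarith
    -- compute the linear integral
    have hlin : (∫ t in x..(x + 1),
        ((x + 1 - t) * x ^ (1 - α) + (t - x) * (x + 1) ^ (1 - α))) =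
        (x ^ (1 - α) + (x + 1) ^ (1 - α)) / 2 := by
      have heq : ∀ t : ℝ, (x + 1 - t) * x ^ (1 - α) + (t - x) * (x + 1) ^ (1 - α) =
          ((x + 1) * x ^ (1 - α) - x * (x + 1) ^ (1 - α)) +
          ((x + 1) ^ (1 - α) - x ^ (1 - α)) * t := fun t => by ring
      simp_rw [heq]
      rw [intervalIntegral.integral_add intervalIntegrable_const
          (show IntervalIntegrable (fun t : ℝ =>
              ((x + 1) ^ (1 - α) - x ^ (1 - α)) * t) _ x (x + 1) from
            (continuous_const.mul continuous_id').intervalIntegrable _ _),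
        intervalIntegral.integral_const_mul, integral_id, intervalIntegral.integral_const]
      simp only [smul_eq_mul]
      ring
    rw [hlin, hI1] at key
    rw [lt_div_iff₀ hD]
    have key2 : (x ^ (1 - α) + (x + 1) ^ (1 - α)) * (2 - α) <
        ((x + 1) ^ (2 - α) - x ^ (2 - α)) * 2 := by
      rw [div_lt_div_iff₀ (by norm_num) hp] at key
      linarith
    nlinarith
  · -- upper bound
    have key : (∫ t in x..(x + 1), t ^ (-α)) < ∫ t in x..(x + 1), (x : ℝ) ^ (-α) := by
      apply integral_lt_integral_of_continuousOn_of_le_of_exists_lt (lt_add_one x)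
      · exact hc2
      · exact continuousOn_const
      · intro t ht
        exact (Real.rpow_lt_rpow_of_neg hx ht.1 (by linarith)).le
      · exact ⟨x + 1, ⟨by linarith, le_refl _⟩,
          Real.rpow_lt_rpow_of_neg hx (lt_add_one x) (by linarith)⟩
    rw [hI2, intervalIntegral.integral_const] at key
    simp at key
    -- key : ((x+1)^(1-α) - x^(1-α)) / (1-α) < x^(-α)
    have key2 : (x + 1) ^ (1 - α) - x ^ (1 - α) < (1 - α) * x ^ (-α) := by
      rw [div_lt_iff₀ hβ] at key
      linarith
    have e1 : (x + 1) ^ (2 - α) = (x + 1) * (x + 1) ^ (1 - α) := by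
      rw [show (2 - α) = 1 + (1 - α) by ring, Real.rpow_add hx1, Real.rpow_one]
    have e2 : x ^ (2 - α) = x * x ^ (1 - α) := by
      rw [show (2 - α) = 1 + (1 - α) by ring, Real.rpow_add hx, Real.rpow_one]
    have e3 : x ^ (1 - α) = x * x ^ (-α) := by
      rw [show (1 - α) = 1 + (-α) by ring, Real.rpow_add hx, Real.rpow_one]
    have hmul := mul_lt_mul_of_pos_left key2 hx
    have h4 : x * ((1 - α) * x ^ (-α)) = (1 - α) * x ^ (1 - α) := by
      rw [e3]; ring
    have hN : (x + 1) * (x + 1) ^ (1 - α) - x * x ^ (1 - α) - (2 - α) * x ^ (1 - α) <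
        (x + 1) ^ (1 - α) - x ^ (1 - α) := by nlinarith [hmul, h4]
    rw [div_lt_div_iff₀ hD hp, e1, e2]
    have := mul_lt_mul_of_pos_right hN hp
    linarith
end

section
/- Let 0 < α < 1 and σ = 1 − α/2. For every integer s ≥ 1 define κ_s = ((s+σ)^{2−α} − (s−1+σ)^{2−α} − (2−α)(s−1+σ)^{1−α}) / ((2−α)((s+σ)^{1−α} − (s−1+σ)^{1−α})). Then for all s ≥ 1, 1/2 < κ_s < 1/(2−α). -/
open intervalIntegral Set

/-- Strict tangent-line inequality for `x ^ β`, `0 < β < 1`. -/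
lemma kappa_aux_upper {β a : ℝ} (hβ0 : 0 < β) (hβ1 : β < 1) (ha : 0 < a) :
    (a + 1) ^ β - a ^ β < β * a ^ (β - 1) := by
  have hab : a < a + 1 := lt_add_one a
  have hI : ∫ x in a..(a + 1), x ^ (β - 1) = ((a + 1) ^ β - a ^ β) / β := by
    rw [integral_rpow (Or.inl (by linarith))]
    ring_nf
  have hcont : ContinuousOn (fun x : ℝ => x ^ (β - 1)) (Icc a (a + 1)) :=
    continuousOn_id.rpow_const (fun x hx => Or.inl (ne_of_gt (lt_of_lt_of_le ha hx.1)))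
  have hlt : (∫ x in a..(a + 1), x ^ (β - 1)) < ∫ x in a..(a + 1), a ^ (β - 1) := by
    apply integral_lt_integral_of_continuousOn_of_le_of_exists_lt hab hcont
      continuousOn_const
    · intro x hx
      exact (Real.rpow_lt_rpow_of_neg ha hx.1 (by linarith)).le
    · exact ⟨a + 1, ⟨hab.le, le_refl _⟩,
        Real.rpow_lt_rpow_of_neg ha hab (by linarith)⟩
  rw [hI, integral_const] at hlt
  have : (a + 1 - a) • a ^ (β - 1) = a ^ (β - 1) := by simp
  rw [this] at hlt
  rw [div_lt_iff₀ hβ0] at hlt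
  linarith

/-- Strict trapezoid inequality for `x ^ β`, `0 < β < 1`. -/
lemma kappa_aux_lower {β a : ℝ} (hβ0 : 0 < β) (hβ1 : β < 1) (ha : 0 < a) :
    (β + 1) * ((a + 1) ^ β + a ^ β) < 2 * ((a + 1) ^ (β + 1) - a ^ (β + 1)) := by
  set b : ℝ := a + 1 with hbdef
  have hab : a < b := lt_add_one a
  have hb : 0 < b := by linarith
  have hconc := Real.strictConcaveOn_rpow hβ0 hβ1
  have hI : ∫ x in a..b, x ^ β = (b ^ (β + 1) - a ^ (β + 1)) / (β + 1) := by
    rw [integral_rpow (Or.inl (by linarith))]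
  -- symmetry: ∫ (a+b-x)^β = ∫ x^β
  have hJ : (∫ x in a..b, (a + b - x) ^ β) = ∫ x in a..b, x ^ β := by
    have := integral_comp_sub_left (a := a) (b := b) (fun x : ℝ => x ^ β) (a + b)
    have e1 : a + b - b = a := by ring
    have e2 : a + b - a = b := by ring
    rw [e1, e2] at this
    exact this
  have hcont : ContinuousOn (fun x : ℝ => x ^ β + (a + b - x) ^ β) (Icc a b) := by
    apply ContinuousOn.add
    · exact continuousOn_id.rpow_const (fun x hx => Or.inr hβ0.le)
    · exact (continuousOn_const.sub continuousOn_id).rpow_const (fun x hx => Or.inr hβ0.le)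
  have hlt : (∫ x in a..b, (a ^ β + b ^ β)) <
      ∫ x in a..b, (x ^ β + (a + b - x) ^ β) := by
    apply integral_lt_integral_of_continuousOn_of_le_of_exists_lt hab continuousOn_const hcont
    · intro x hx
      set t : ℝ := x - a with htdef
      have ht0 : 0 ≤ t := by have := hx.1; simp [htdef]; linarith
      have ht1 : t ≤ 1 := by have := hx.2; simp [htdef, hbdef] at *; linarith
      have h1 : (1 - t) * a ^ β + t * b ^ β ≤ x ^ β := by
        have := hconc.concaveOn.2 (Set.mem_Ici.mpr ha.le) (Set.mem_Ici.mpr hb.le)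
          (by linarith : (0:ℝ) ≤ 1 - t) ht0 (by ring)
        simpa [smul_eq_mul, htdef] using (by
          have e : (1 - t) • a + t • b = x := by simp [smul_eq_mul, htdef, hbdef]; ring
          rw [e] at this; exact this)
      have h2 : t * a ^ β + (1 - t) * b ^ β ≤ (a + b - x) ^ β := by
        have := hconc.concaveOn.2 (Set.mem_Ici.mpr ha.le) (Set.mem_Ici.mpr hb.le)
          ht0 (by linarith : (0:ℝ) ≤ 1 - t) (by ring)
        have e : t • a + (1 - t) • b = a + b - x := by
          simp [smul_eq_mul, htdef, hbdef]; ring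
        rw [e] at this
        simpa [smul_eq_mul] using this
      linarith
    · refine ⟨(a + b) / 2, ⟨by linarith, by linarith⟩, ?_⟩
      have hmid := hconc.2 (Set.mem_Ici.mpr ha.le) (Set.mem_Ici.mpr hb.le) hab.ne
        (by norm_num : (0:ℝ) < 1/2) (by norm_num : (0:ℝ) < 1/2) (by norm_num)
      have e : (1/2 : ℝ) • a + (1/2 : ℝ) • b = (a + b) / 2 := by
        simp [smul_eq_mul]; ring
      rw [e] at hmid
      have e2 : a + b - (a + b) / 2 = (a + b) / 2 := by ring
      rw [e2]
      simp only [smul_eq_mul] at hmid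
      linarith
  have hint1 : IntervalIntegrable (fun x : ℝ => x ^ β) MeasureTheory.volume a b :=
    (continuousOn_id.rpow_const fun x hx => Or.inr hβ0.le).intervalIntegrable_of_Icc hab.le
  have hint2 : IntervalIntegrable (fun x : ℝ => (a + b - x) ^ β) MeasureTheory.volume a b :=
    ((continuousOn_const.sub continuousOn_id).rpow_const
      (fun x hx => Or.inr hβ0.le)).intervalIntegrable_of_Icc hab.le
  have hsplit : (∫ x in a..b, (x ^ β + (a + b - x) ^ β)) =
      (∫ x in a..b, x ^ β) + ∫ x in a..b, (a + b - x) ^ β :=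
    intervalIntegral.integral_add hint1 hint2
  rw [hsplit, hJ, hI, integral_const] at hlt
  have e3 : (b - a) • (a ^ β + b ^ β) = a ^ β + b ^ β := by
    simp [hbdef]
  rw [e3] at hlt
  have hβ1' : (0:ℝ) < β + 1 := by linarith
  rw [← add_div, lt_div_iff₀ hβ1'] at hlt
  linarith

/-- Lemma 3 (Alikhanov, L2-1_σ paper): for `0 < α < 1`, `σ = 1 − α/2` and every integer
`s ≥ 1`, the quantity
`κ_s = ((s+σ)^{2−α} − (s−1+σ)^{2−α} − (2−α)(s−1+σ)^{1−α}) / ((2−α)((s+σ)^{1−α} − (s−1+σ)^{1−α}))`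
satisfies `1/2 < κ_s < 1/(2−α)`. -/
theorem kappa_s_bounds (α σ : ℝ) (hα0 : 0 < α) (hα1 : α < 1) (hσ : σ = 1 - α / 2)
    (s : ℕ) (hs : 1 ≤ s) :
    1 / 2 < (((s : ℝ) + σ) ^ (2 - α) - ((s : ℝ) - 1 + σ) ^ (2 - α) -
          (2 - α) * ((s : ℝ) - 1 + σ) ^ (1 - α)) /
        ((2 - α) * (((s : ℝ) + σ) ^ (1 - α) - ((s : ℝ) - 1 + σ) ^ (1 - α))) ∧
      (((s : ℝ) + σ) ^ (2 - α) - ((s : ℝ) - 1 + σ) ^ (2 - α) -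
          (2 - α) * ((s : ℝ) - 1 + σ) ^ (1 - α)) /
        ((2 - α) * (((s : ℝ) + σ) ^ (1 - α) - ((s : ℝ) - 1 + σ) ^ (1 - α))) < 1 / (2 - α) := by
  have hs1 : (1 : ℝ) ≤ (s : ℝ) := by exact_mod_cast hs
  set a : ℝ := (s : ℝ) - 1 + σ with hadef
  have ha : 0 < a := by rw [hadef, hσ]; linarith
  have hbeq : (s : ℝ) + σ = a + 1 := by rw [hadef]; ring
  have hβ0 : 0 < 1 - α := by linarith
  have hβ1 : 1 - α < 1 := by linarith
  have h2α : (2 : ℝ) - α = (1 - α) + 1 := by ring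
  rw [hbeq, h2α]
  set β : ℝ := 1 - α with hβdef
  have hβp : (0 : ℝ) < β + 1 := by linarith
  have hU := kappa_aux_upper hβ0 hβ1 ha
  have hL := kappa_aux_lower hβ0 hβ1 ha
  have hpow : a ^ β < (a + 1) ^ β := Real.rpow_lt_rpow ha.le (lt_add_one a) hβ0
  have hD : 0 < (β + 1) * ((a + 1) ^ β - a ^ β) := mul_pos hβp (sub_pos.mpr hpow)
  constructor
  · rw [lt_div_iff₀ hD]
    have h' := hL
    ring_nf at h' ⊢
    linarith
  · rw [div_lt_div_iff₀ hD hβp]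
    have haa : a * a ^ (β - 1) = a ^ β := by
      rw [Real.rpow_sub_one ha.ne']
      field_simp
    have hmul := mul_lt_mul_of_pos_left hU ha
    have hb1 : (a + 1) ^ (β + 1) = (a + 1) ^ β * (a + 1) :=
      Real.rpow_add_one (by positivity) β
    have ha1 : a ^ (β + 1) = a ^ β * a := Real.rpow_add_one ha.ne' β
    have key : (a + 1) ^ (β + 1) - a ^ (β + 1) - (β + 1) * a ^ β < (a + 1) ^ β - a ^ β := by
      nlinarith [hmul, haa, hb1, ha1]
    nlinarith [mul_lt_mul_of_pos_right key hβp]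
end

section
/- Let 0 < α < 1 and σ = 1 − α/2. For every integer l ≥ 1 define b_l^{(α,σ)} = (1/(2−α)) [(l+σ)^{2−α} − (l−1+σ)^{2−α}] − (1/2) [(l+σ)^{1−α} + (l−1+σ)^{1−α}]. Then b_l^{(α,σ)} > 0 for all l ≥ 1. -/
open intervalIntegral Set

/-- Trapezoid rule strict inequality for `x ↦ x^p`, `0 < p < 1`, on `[a, a+1]`, `0 < a`. -/
lemma trapezoid_lt_rpow {p a : ℝ} (hp0 : 0 < p) (hp1 : p < 1) (ha : 0 < a) :
    (a ^ p + (a + 1) ^ p) / 2 < ((a + 1) ^ (p + 1) - a ^ (p + 1)) / (p + 1) := by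
  set b := a + 1 with hb
  have hab : a < b := by simp [hb]
  have hconc := Real.strictConcaveOn_rpow hp0 hp1
  have haI : a ∈ Ici (0:ℝ) := le_of_lt ha
  have hbI : b ∈ Ici (0:ℝ) := by simp [hb]; linarith
  -- linear interpolant
  set g : ℝ → ℝ := fun x => a ^ p * (b - x) + b ^ p * (x - a) with hg
  have hle : ∀ x ∈ Ioc a b, g x ≤ x ^ p := by
    intro x hx
    have ht0 : 0 ≤ b - x := by linarith [hx.2]
    have ht1 : 0 ≤ x - a := by linarith [hx.1]
    have hsum : (b - x) + (x - a) = 1 := by rw [hb]; ring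
    have := hconc.concaveOn.2 haI hbI ht0 ht1 hsum
    have hx' : (b - x) • a + (x - a) • b = x := by
      simp only [smul_eq_mul]; nlinarith [hsum]
    rw [hx'] at this
    simpa [hg, smul_eq_mul, mul_comm] using this
  have hlt : ∃ c ∈ Icc a b, g c < c ^ p := by
    refine ⟨(a + b) / 2, ⟨by linarith, by linarith⟩, ?_⟩
    have hne : a ≠ b := by linarith
    have := hconc.2 haI hbI hne (by norm_num : (0:ℝ) < 1/2) (by norm_num : (0:ℝ) < 1/2)
      (by norm_num)
    have hx' : (1/2 : ℝ) • a + (1/2 : ℝ) • b = (a + b) / 2 := by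
      simp [smul_eq_mul]; ring
    rw [hx'] at this
    have hgx : g ((a + b) / 2) = (1/2) * a ^ p + (1/2) * b ^ p := by
      simp only [hg, hb]; ring
    rw [hgx]
    simpa [smul_eq_mul] using this
  have hgc : ContinuousOn g (Icc a b) := by fun_prop
  have hfc : ContinuousOn (fun x : ℝ => x ^ p) (Icc a b) := by
    apply ContinuousOn.rpow_const continuousOn_id
    intro x hx; left; exact ne_of_gt (lt_of_lt_of_le ha hx.1)
  have hint := integral_lt_integral_of_continuousOn_of_le_of_exists_lt hab hgc hfc hle hlt
  have h1 : (∫ x in a..b, x ^ p) = (b ^ (p + 1) - a ^ (p + 1)) / (p + 1) := by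
    rw [integral_rpow (Or.inl (by linarith))]
  have h2 : (∫ x in a..b, g x) = (a ^ p + b ^ p) / 2 := by
    simp only [hg]
    rw [intervalIntegral.integral_add, intervalIntegral.integral_const_mul,
      intervalIntegral.integral_const_mul]
    · rw [intervalIntegral.integral_sub intervalIntegrable_const intervalIntegral.intervalIntegrable_id,
        intervalIntegral.integral_sub intervalIntegral.intervalIntegrable_id intervalIntegrable_const]
      simp [integral_id, hb]; ring
    · exact Continuous.intervalIntegrable (by fun_prop) _ _
    · exact Continuous.intervalIntegrable (by fun_prop) _ _
  rw [h1, h2] at hint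
  exact hint

/-- Corollary 2 (Alikhanov, L2-1_σ paper): for `0 < α < 1`, `σ = 1 − α/2`, the coefficients
`b_l^{(α,σ)} = (1/(2−α))[(l+σ)^{2−α} − (l−1+σ)^{2−α}] − (1/2)[(l+σ)^{1−α} + (l−1+σ)^{1−α}]`
are positive for all `l ≥ 1`. -/
theorem b_coeff_pos (α σ : ℝ) (hα0 : 0 < α) (hα1 : α < 1) (hσ : σ = 1 - α / 2)
    (l : ℕ) (hl : 1 ≤ l) :
    0 < (1 / (2 - α)) * (((l : ℝ) + σ) ^ (2 - α) - ((l : ℝ) - 1 + σ) ^ (2 - α)) -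
        (1 / 2) * (((l : ℝ) + σ) ^ (1 - α) + ((l : ℝ) - 1 + σ) ^ (1 - α)) := by
  have hl1 : (1:ℝ) ≤ l := by exact_mod_cast hl
  have ha : 0 < (l : ℝ) - 1 + σ := by rw [hσ]; linarith
  have key := trapezoid_lt_rpow (p := 1 - α) (a := (l : ℝ) - 1 + σ)
    (by linarith) (by linarith) ha
  have e1 : (l : ℝ) - 1 + σ + 1 = (l : ℝ) + σ := by ring
  have e2 : (1 - α) + 1 = 2 - α := by ring
  rw [e1, e2] at key
  have h2α : (0:ℝ) < 2 - α := by linarith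
  rw [div_lt_div_iff₀ (by norm_num) h2α] at key
  have : (1 / (2 - α)) * (((l : ℝ) + σ) ^ (2 - α) - ((l : ℝ) - 1 + σ) ^ (2 - α)) -
      (1 / 2) * (((l : ℝ) + σ) ^ (1 - α) + ((l : ℝ) - 1 + σ) ^ (1 - α)) =
      ((((l : ℝ) + σ) ^ (2 - α) - ((l : ℝ) - 1 + σ) ^ (2 - α)) * 2 -
       (((l : ℝ) - 1 + σ) ^ (1 - α) + ((l : ℝ) + σ) ^ (1 - α)) * (2 - α)) / (2 * (2 - α)) := by
    field_simp; ring
  rw [this]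
  apply div_pos (by linarith) (by linarith)
end

section
/- Let 0 < α < 1, σ = 1 − α/2, and j ≥ 1. With a_0^{(α,σ)} = σ^{1−α}, a_l^{(α,σ)} = (l+σ)^{1−α} − (l−1+σ)^{1−α} for l ≥ 1, and b_l^{(α,σ)} = (1/(2−α))[(l+σ)^{2−α} − (l−1+σ)^{2−α}] − (1/2)[(l+σ)^{1−α} + (l−1+σ)^{1−α}] for l ≥ 1, define c_j^{(α,σ)} = a_j^{(α,σ)} − b_j^{(α,σ)}. Then c_j^{(α,σ)} > ((1−α)/2) (j+σ)^{−α}. -/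
open Real

/-- Bernoulli-type strict bound: for `0 < x`, `0 < β < 1`,
`x ^ β < (x+1) ^ β - β * (x+1) ^ (β - 1)`. -/
lemma aux_strict {x β : ℝ} (hx : 0 < x) (hβ0 : 0 < β) (hβ1 : β < 1) :
    x ^ β < (x + 1) ^ β - β * (x + 1) ^ (β - 1) := by
  set y : ℝ := x + 1 with hy
  have hy0 : 0 < y := by positivity
  have hs : -1 ≤ x / y - 1 := by
    have : 0 ≤ x / y := by positivity
    linarith
  have hs' : x / y - 1 ≠ 0 := by
    have : x / y < 1 := (div_lt_one hy0).mpr (by linarith)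
    intro h; linarith [sub_eq_zero.mp h]
  have h := rpow_one_add_lt_one_add_mul_self hs hs' hβ0 hβ1
  rw [add_sub_cancel] at h
  have hmul : (x / y) ^ β * y ^ β < (1 + β * (x / y - 1)) * y ^ β :=
    mul_lt_mul_of_pos_right h (rpow_pos_of_pos hy0 β)
  have hxy : (x / y) ^ β * y ^ β = x ^ β := by
    rw [Real.div_rpow hx.le hy0.le, div_mul_cancel₀]
    exact (rpow_pos_of_pos hy0 β).ne'
  have hrhs : (1 + β * (x / y - 1)) * y ^ β = y ^ β - β * y ^ (β - 1) := by
    have h1 : y ^ (β - 1) = y ^ β / y := by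
      rw [Real.rpow_sub hy0, Real.rpow_one]
    have h2 : x / y - 1 = -(1 / y) := by
      rw [hy]; field_simp; ring
    rw [h2, h1]; field_simp; ring
  rw [hxy, hrhs] at hmul
  exact hmul

/-- Bernoulli bound: for `0 < x`, `1 ≤ p`,
`(x+1) ^ p - p * (x+1) ^ (p-1) ≤ x ^ p`; here used with `p = β + 1`. -/
lemma aux_le {x p : ℝ} (hx : 0 < x) (hp : 1 ≤ p) :
    (x + 1) ^ p - p * (x + 1) ^ (p - 1) ≤ x ^ p := by
  set y : ℝ := x + 1 with hy
  have hy0 : 0 < y := by positivity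
  have hs : -1 ≤ x / y - 1 := by
    have : 0 ≤ x / y := by positivity
    linarith
  have h := one_add_mul_self_le_rpow_one_add hs hp
  rw [add_sub_cancel] at h
  have hmul : (1 + p * (x / y - 1)) * y ^ p ≤ (x / y) ^ p * y ^ p :=
    mul_le_mul_of_nonneg_right h (rpow_pos_of_pos hy0 p).le
  have hxy : (x / y) ^ p * y ^ p = x ^ p := by
    rw [Real.div_rpow hx.le hy0.le, div_mul_cancel₀]
    exact (rpow_pos_of_pos hy0 p).ne'
  have hrhs : (1 + p * (x / y - 1)) * y ^ p = y ^ p - p * y ^ (p - 1) := by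
    have h1 : y ^ (p - 1) = y ^ p / y := by
      rw [Real.rpow_sub hy0, Real.rpow_one]
    have h2 : x / y - 1 = -(1 / y) := by
      rw [hy]; field_simp; ring
    rw [h2, h1]; field_simp; ring
  rw [hxy, hrhs] at hmul
  exact hmul

/-- Lemma 4, inequality (4.102) (Alikhanov, L2-1_σ paper): for `0 < α < 1`, `σ = 1 − α/2`,
`j ≥ 1`, the coefficient `c_j^{(α,σ)} = a_j^{(α,σ)} − b_j^{(α,σ)}` satisfies
`c_j^{(α,σ)} > ((1−α)/2) (j+σ)^{−α}`. -/
theorem c_j_lower_bound (α σ : ℝ) (hα0 : 0 < α) (hα1 : α < 1) (hσ : σ = 1 - α / 2)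
    (j : ℕ) (hj : 1 ≤ j) :
    ((((j : ℝ) + σ) ^ (1 - α) - ((j : ℝ) - 1 + σ) ^ (1 - α)) -
        ((1 / (2 - α)) * (((j : ℝ) + σ) ^ (2 - α) - ((j : ℝ) - 1 + σ) ^ (2 - α)) -
          (1 / 2) * (((j : ℝ) + σ) ^ (1 - α) + ((j : ℝ) - 1 + σ) ^ (1 - α)))) >
      ((1 - α) / 2) * ((j : ℝ) + σ) ^ (-α) := by
  have hj1 : (1 : ℝ) ≤ (j : ℝ) := by exact_mod_cast hj
  set x : ℝ := (j : ℝ) - 1 + σ with hxdef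
  have hx : 0 < x := by
    have : 0 < σ := by rw [hσ]; linarith
    simp only [hxdef]; linarith
  have hyx : (j : ℝ) + σ = x + 1 := by ring
  set β : ℝ := 1 - α with hβdef
  have hβ0 : 0 < β := by simp only [hβdef]; linarith
  have hβ1 : β < 1 := by simp only [hβdef]; linarith
  have hA := aux_strict hx hβ0 hβ1
  have hB := aux_le hx (p := β + 1) (by linarith)
  have h2α : (2 : ℝ) - α = β + 1 := by simp only [hβdef]; ring
  have hmα : -α = β - 1 := by simp only [hβdef]; ring
  have hpos : 0 < (2 : ℝ) - α := by linarith
  rw [hyx, h2α, hmα]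
  rw [show β + 1 - 1 = β from by ring] at hB
  have hy0 : (0:ℝ) < x + 1 := by linarith
  have hyb : 0 < (x + 1) ^ β := rpow_pos_of_pos hy0 β
  have key : (x + 1) ^ (β + 1) - x ^ (β + 1) ≤ (β + 1) * (x + 1) ^ β := by linarith
  have h1 : (1 / (2 - α)) * ((x + 1) ^ (β + 1) - x ^ (β + 1)) ≤ (x + 1) ^ β := by
    rw [h2α] at hpos
    rw [div_mul_eq_mul_div, one_mul, div_le_iff₀ (by rw [h2α]; exact hpos)]
    rw [h2α]
    linarith
  rw [h2α] at h1
  clear_value x β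
  linarith [hA, h1]
end

section
/- Let 0 < α < 1, σ = 1 − α/2, and j ≥ 1. Then the coefficients of the L2-1_σ formula are strictly decreasing: c_0^{(α,σ)} > c_1^{(α,σ)} > c_2^{(α,σ)} > … > c_{j-1}^{(α,σ)} > c_j^{(α,σ)}. -/
/-- The coefficients `a_l^{(α,σ)}` of the L2-1_σ formula. -/
noncomputable def aCoeff (α σ : ℝ) (l : ℕ) : ℝ :=
  if l = 0 then σ ^ (1 - α)
  else ((l : ℝ) + σ) ^ (1 - α) - ((l : ℝ) - 1 + σ) ^ (1 - α)

/-- The coefficients `b_l^{(α,σ)}` of the L2-1_σ formula (for `l ≥ 1`). -/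
noncomputable def bCoeff (α σ : ℝ) (l : ℕ) : ℝ :=
  (1 / (2 - α)) * (((l : ℝ) + σ) ^ (2 - α) - ((l : ℝ) - 1 + σ) ^ (2 - α)) -
    (1 / 2) * (((l : ℝ) + σ) ^ (1 - α) + ((l : ℝ) - 1 + σ) ^ (1 - α))

/-- The coefficients `c_s^{(α,σ)}` (for `0 ≤ s ≤ j`) of the L2-1_σ formula:
`c_0 = a_0` if `j = 0`; for `j ≥ 1`, `c_0 = a_0 + b_1`,
`c_s = a_s + b_{s+1} − b_s` for `1 ≤ s ≤ j−1`, and `c_j = a_j − b_j`. -/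
noncomputable def cCoeff (α σ : ℝ) (j s : ℕ) : ℝ :=
  if j = 0 then σ ^ (1 - α)
  else if s = 0 then aCoeff α σ 0 + bCoeff α σ 1
  else if s < j then aCoeff α σ s + bCoeff α σ (s + 1) - bCoeff α σ s
  else aCoeff α σ s - bCoeff α σ s

section L21SigmaAux

open Real Set


private lemma hasDerivAt_rpow_shift (e c x : ℝ) (h : 0 < x + c) :
    HasDerivAt (fun y : ℝ => (y + c) ^ e) (e * (x + c) ^ (e - 1)) x := by
  have h1 : HasDerivAt (fun y : ℝ => y + c) 1 x := (hasDerivAt_id x).add_const c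
  have h2 := (Real.hasDerivAt_rpow_const (x := x + c) (p := e) (Or.inl h.ne')).comp x h1
  exact h2.congr_deriv (mul_one _)

private lemma mvt1 (g g' : ℝ → ℝ) {a b : ℝ} (hab : a < b)
    (hg : ∀ x ∈ Set.Icc a b, HasDerivAt g (g' x) x) :
    ∃ c ∈ Set.Ioo a b, g b - g a = g' c * (b - a) := by
  obtain ⟨c, hc, hceq⟩ := exists_hasDerivAt_eq_slope g g' hab
    (fun x hx => (hg x hx).continuousAt.continuousWithinAt)
    (fun x hx => hg x (Set.Ioo_subset_Icc_self hx))
  refine ⟨c, hc, ?_⟩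
  rw [hceq, div_mul_cancel₀]
  exact sub_ne_zero.2 hab.ne'

private lemma strictMonoOn_Ioi_of_hasDerivAt (g g' : ℝ → ℝ)
    (hg : ∀ x ∈ Set.Ioi (0:ℝ), HasDerivAt g (g' x) x)
    (hpos : ∀ x ∈ Set.Ioi (0:ℝ), 0 < g' x) : StrictMonoOn g (Set.Ioi 0) := by
  apply strictMonoOn_of_deriv_pos (convex_Ioi 0)
    (fun x hx => (hg x hx).continuousAt.continuousWithinAt)
  intro x hx
  rw [interior_Ioi] at hx
  rw [(hg x hx).deriv]
  exact hpos x hx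

private lemma diffPow_strictMono {K e : ℝ} (he : e < 1) (hKe : K * e < 0) :
    StrictMonoOn (fun x : ℝ => K * ((x + 1) ^ e - x ^ e)) (Set.Ioi 0) := by
  apply strictMonoOn_Ioi_of_hasDerivAt _
    (fun x => K * e * ((x + 1) ^ (e - 1) - x ^ (e - 1)))
  · intro x hx
    have hx0 : (0:ℝ) < x := hx
    have h1 : HasDerivAt (fun y : ℝ => (y + 1) ^ e) (e * (x + 1) ^ (e - 1)) x :=
      hasDerivAt_rpow_shift e 1 x (by linarith)
    have h2 : HasDerivAt (fun y : ℝ => y ^ e) (e * x ^ (e - 1)) x :=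
      Real.hasDerivAt_rpow_const (Or.inl hx0.ne')
    have h3 := (h1.sub h2).const_mul K
    convert h3 using 1
    · rfl
    · rfl
    · rfl
    ring
  · intro x hx
    have hx0 : (0:ℝ) < x := hx
    have hlt : (x + 1) ^ (e - 1) < x ^ (e - 1) :=
      Real.rpow_lt_rpow_of_neg hx0 (by linarith) (by linarith)
    exact mul_pos_of_neg_of_neg hKe (by linarith)

private lemma secondDiff_pos (p p' : ℝ → ℝ) (t : ℝ) (ht : 0 < t)
    (hp : ∀ x ∈ Set.Ioi (0:ℝ), HasDerivAt p (p' x) x)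
    (hmono : StrictMonoOn p' (Set.Ioi 0)) :
    0 < p t + p (t + 2) - 2 * p (t + 1) := by
  obtain ⟨c1, hc1, e1⟩ := mvt1 p p' (show t < t + 1 by linarith)
    (fun x hx => hp x (lt_of_lt_of_le ht hx.1))
  obtain ⟨c2, hc2, e2⟩ := mvt1 p p' (show t + 1 < t + 2 by linarith)
    (fun x hx => hp x (lt_of_lt_of_le (by linarith) hx.1))
  have e1' : p (t + 1) - p t = p' c1 := by rw [e1]; ring
  have e2' : p (t + 2) - p (t + 1) = p' c2 := by rw [e2]; ring
  have hlt : p' c1 < p' c2 :=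
    hmono (show c1 ∈ Set.Ioi (0:ℝ) from lt_trans ht hc1.1)
      (show c2 ∈ Set.Ioi (0:ℝ) from lt_trans (by linarith) hc2.1)
      (lt_trans hc1.2 hc2.1)
  linarith

private lemma thirdDiff_pow_pos {β : ℝ} (hβ0 : 0 < β) (hβ1 : β < 1) {t : ℝ} (ht : 0 < t) :
    0 < (t + 3) ^ β - 3 * (t + 2) ^ β + 3 * (t + 1) ^ β - t ^ β := by
  have key := secondDiff_pos (fun x => (x + 1) ^ β - x ^ β)
      (fun x => β * ((x + 1) ^ (β - 1) - x ^ (β - 1))) t ht ?_ ?_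
  · ring_nf at key ⊢
    linarith
  · intro x hx
    have hx0 : (0:ℝ) < x := hx
    have h1 : HasDerivAt (fun y : ℝ => (y + 1) ^ β) (β * (x + 1) ^ (β - 1)) x :=
      hasDerivAt_rpow_shift β 1 x (by linarith)
    have h2 : HasDerivAt (fun y : ℝ => y ^ β) (β * x ^ (β - 1)) x :=
      Real.hasDerivAt_rpow_const (Or.inl hx0.ne')
    convert h1.sub h2 using 1
    · rfl
    · rfl
    · rfl
    ring
  · exact diffPow_strictMono (by linarith) (by nlinarith)

private lemma thirdDiff_pow_neg {β γ : ℝ} (hβ0 : 0 < β) (hβ1 : β < 1) (hγ : γ = β + 1)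
    {t : ℝ} (ht : 0 < t) :
    0 < t ^ γ - 3 * (t + 1) ^ γ + 3 * (t + 2) ^ γ - (t + 3) ^ γ := by
  have hγ1 : (1:ℝ) < γ := by rw [hγ]; linarith
  have key := secondDiff_pos (fun x => x ^ γ - (x + 1) ^ γ)
      (fun x => -γ * ((x + 1) ^ (γ - 1) - x ^ (γ - 1))) t ht ?_ ?_
  · ring_nf at key ⊢
    linarith
  · intro x hx
    have hx0 : (0:ℝ) < x := hx
    have h1 : HasDerivAt (fun y : ℝ => (y + 1) ^ γ) (γ * (x + 1) ^ (γ - 1)) x :=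
      hasDerivAt_rpow_shift γ 1 x (by linarith)
    have h2 : HasDerivAt (fun y : ℝ => y ^ γ) (γ * x ^ (γ - 1)) x :=
      Real.hasDerivAt_rpow_const (Or.inl hx0.ne')
    convert h2.sub h1 using 1
    · rfl
    · rfl
    · rfl
    ring
  · exact diffPow_strictMono (by rw [hγ]; linarith) (by nlinarith)

private lemma trapezoid_pos {β γ : ℝ} (hβ0 : 0 < β) (hβ1 : β < 1) (hγ : γ = β + 1)
    {u : ℝ} (hu : 0 < u) :
    0 < 1 / γ * ((u + 1) ^ γ - u ^ γ) - 1 / 2 * ((u + 1) ^ β + u ^ β) := by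
  have hγ0 : (0:ℝ) < γ := by rw [hγ]; linarith
  set B : ℝ → ℝ := fun x => 1 / γ * (x ^ γ - u ^ γ) - (x - u) * ((x ^ β + u ^ β) / 2)
    with hB
  have hBd : ∀ x : ℝ, 0 < x →
      HasDerivAt B ((x ^ β - u ^ β) / 2 - (x - u) * (β * x ^ (β - 1)) / 2) x := by
    intro x hx
    have h1 : HasDerivAt (fun y : ℝ => y ^ γ) (γ * x ^ (γ - 1)) x :=
      Real.hasDerivAt_rpow_const (Or.inl hx.ne')
    have h3 : HasDerivAt (fun y : ℝ => 1 / γ * (y ^ γ - u ^ γ)) (1 / γ * (γ * x ^ (γ - 1))) x :=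
      (h1.sub_const _).const_mul _
    have h4 : HasDerivAt (fun y : ℝ => y ^ β) (β * x ^ (β - 1)) x :=
      Real.hasDerivAt_rpow_const (Or.inl hx.ne')
    have h5 : HasDerivAt (fun y : ℝ => (y ^ β + u ^ β) / 2) (β * x ^ (β - 1) / 2) x :=
      (h4.add_const _).div_const 2
    have h6 : HasDerivAt (fun y : ℝ => y - u) 1 x := (hasDerivAt_id x).sub_const u
    have h7 := h6.mul h5
    have h8 := h3.sub h7
    have hxg : x ^ (γ - 1) = x ^ β := by rw [show γ - 1 = β by rw [hγ]; ring]
    convert h8 using 1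
    · rfl
    · rfl
    · rfl
    rw [hxg]
    field_simp
    ring
  have hmono : StrictMonoOn B (Set.Icc u (u + 1)) := by
    apply strictMonoOn_of_deriv_pos (convex_Icc _ _)
    · intro x hx
      exact (hBd x (lt_of_lt_of_le hu hx.1)).continuousAt.continuousWithinAt
    · intro x hx
      rw [interior_Icc] at hx
      have hx0 : (0:ℝ) < x := lt_trans hu hx.1
      rw [(hBd x hx0).deriv]
      obtain ⟨ξ, hξ, heq⟩ := mvt1 (fun y => y ^ β) (fun y => β * y ^ (β - 1)) hx.1
        (fun y hy => Real.hasDerivAt_rpow_const (Or.inl (lt_of_lt_of_le hu hy.1).ne'))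
      have hξ0 : (0:ℝ) < ξ := lt_trans hu hξ.1
      have hlt : x ^ (β - 1) < ξ ^ (β - 1) :=
        Real.rpow_lt_rpow_of_neg hξ0 hξ.2 (by linarith)
      have hprod : 0 < (x - u) * β * (ξ ^ (β - 1) - x ^ (β - 1)) :=
        mul_pos (mul_pos (sub_pos.2 hx.1) hβ0) (by linarith)
      nlinarith [heq]
  have h01 := hmono (Set.left_mem_Icc.2 (by linarith)) (Set.right_mem_Icc.2 (by linarith))
    (by linarith)
  have hBu : B u = 0 := by simp [hB]
  have hBu1 : B (u + 1) = 1 / γ * ((u + 1) ^ γ - u ^ γ) - 1 / 2 * ((u + 1) ^ β + u ^ β) := by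
    simp only [hB]; ring
  rw [hBu, hBu1] at h01
  exact h01

private lemma middle_pos {β γ : ℝ} (hβ0 : 0 < β) (hβ1 : β < 1) (hγ : γ = β + 1)
    {t : ℝ} (ht : 0 < t) :
    0 < (((t+1)^β - t^β) - ((t+2)^β - (t+1)^β))
      + 2*(1/γ*((t+2)^γ - (t+1)^γ) - 1/2*((t+2)^β + (t+1)^β))
      - (1/γ*((t+1)^γ - t^γ) - 1/2*((t+1)^β + t^β))
      - (1/γ*((t+3)^γ - (t+2)^γ) - 1/2*((t+3)^β + (t+2)^β)) := by
  have hγ0 : (0:ℝ) < γ := by rw [hγ]; linarith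
  have h1 := thirdDiff_pow_pos hβ0 hβ1 ht
  have h2 := thirdDiff_pow_neg hβ0 hβ1 hγ ht
  have key : (((t+1)^β - t^β) - ((t+2)^β - (t+1)^β))
      + 2*(1/γ*((t+2)^γ - (t+1)^γ) - 1/2*((t+2)^β + (t+1)^β))
      - (1/γ*((t+1)^γ - t^γ) - 1/2*((t+1)^β + t^β))
      - (1/γ*((t+3)^γ - (t+2)^γ) - 1/2*((t+3)^β + (t+2)^β))
      = 1/2 * ((t + 3) ^ β - 3 * (t + 2) ^ β + 3 * (t + 1) ^ β - t ^ β)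
        + 1/γ * (t ^ γ - 3 * (t + 1) ^ γ + 3 * (t + 2) ^ γ - (t + 3) ^ γ) := by
    field_simp
    ring
  rw [key]
  have hb : 0 < 1/γ * (t ^ γ - 3 * (t + 1) ^ γ + 3 * (t + 2) ^ γ - (t + 3) ^ γ) :=
    mul_pos (by positivity) h2
  linarith

private lemma last_pos {β γ : ℝ} (hβ0 : 0 < β) (hβ1 : β < 1) (hγ : γ = β + 1)
    {t : ℝ} (ht : 0 < t) :
    0 < (((t+1)^β - t^β) - ((t+2)^β - (t+1)^β))
      + 2*(1/γ*((t+2)^γ - (t+1)^γ) - 1/2*((t+2)^β + (t+1)^β))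
      - (1/γ*((t+1)^γ - t^γ) - 1/2*((t+1)^β + t^β)) := by
  have h1 := middle_pos hβ0 hβ1 hγ ht
  have h2 := trapezoid_pos hβ0 hβ1 hγ (u := t + 2) (by linarith)
  rw [show t + 2 + 1 = t + 3 by ring] at h2
  linarith

private lemma bernoulli_23 {β σ : ℝ} (hβ0 : 0 < β) (hβ1 : β < 1)
    (hσ : σ = (β + 1) / 2) : 2 * (2 + σ) ^ β < 3 * (1 + σ) ^ β := by
  have hσ0 : (0:ℝ) < σ := by rw [hσ]; linarith
  have h1σ : (0:ℝ) < 1 + σ := by linarith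
  obtain ⟨ξ, hξ, heq⟩ := mvt1 (fun y => y ^ β) (fun y => β * y ^ (β - 1))
      (show (1:ℝ) + σ < 2 + σ by linarith)
      (fun x hx => Real.hasDerivAt_rpow_const (Or.inl (by nlinarith [hx.1] : (0:ℝ) < x).ne'))
  have hξ0 : (0:ℝ) < ξ := lt_trans h1σ hξ.1
  have hξp : (0:ℝ) < ξ ^ (β - 1) := Real.rpow_pos_of_pos hξ0 _
  have heq' : (2 + σ) ^ β - (1 + σ) ^ β = β * ξ ^ (β - 1) := by
    rw [heq]; ring
  have hlt : ξ ^ (β - 1) < (1 + σ) ^ (β - 1) :=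
    Real.rpow_lt_rpow_of_neg h1σ hξ.1 (by linarith)
  have hrw : (1 + σ) ^ (β - 1) = (1 + σ) ^ β / (1 + σ) := by
    rw [Real.rpow_sub h1σ, Real.rpow_one]
  have hlt2 : ξ ^ (β - 1) * (1 + σ) < (1 + σ) ^ β := by
    rw [hrw] at hlt
    exact (lt_div_iff₀ h1σ).1 hlt
  have h2β : 2 * β ≤ 1 + σ := by rw [hσ]; linarith
  nlinarith [mul_nonneg (by linarith : (0:ℝ) ≤ 1 + σ - 2 * β) hξp.le]

private lemma first_pos {β γ σ : ℝ} (hβ0 : 0 < β) (hβ1 : β < 1) (hγ : γ = β + 1)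
    (hσ : σ = (β + 1) / 2) :
    0 < σ^β - ((1+σ)^β - σ^β)
      + 2*(1/γ*((1+σ)^γ - σ^γ) - 1/2*((1+σ)^β + σ^β))
      - (1/γ*((2+σ)^γ - (1+σ)^γ) - 1/2*((2+σ)^β + (1+σ)^β)) := by
  have hσ0 : (0:ℝ) < σ := by rw [hσ]; linarith
  have e0 : σ ^ γ = σ ^ β * σ := by rw [hγ, Real.rpow_add_one hσ0.ne']
  have e1 : (1 + σ) ^ γ = (1 + σ) ^ β * (1 + σ) := by
    rw [hγ, Real.rpow_add_one (by linarith : (1:ℝ) + σ ≠ 0)]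
  have e2 : (2 + σ) ^ γ = (2 + σ) ^ β * (2 + σ) := by
    rw [hγ, Real.rpow_add_one (by linarith : (2:ℝ) + σ ≠ 0)]
  have hγσ : γ = 2 * σ := by rw [hγ, hσ]; ring
  have key : σ^β - ((1+σ)^β - σ^β)
      + 2*(1/γ*((1+σ)^γ - σ^γ) - 1/2*((1+σ)^β + σ^β))
      - (1/γ*((2+σ)^γ - (1+σ)^γ) - 1/2*((2+σ)^β + (1+σ)^β))
      = (3 * (1+σ)^β - 2 * (2+σ)^β) / (2 * σ) := by
    rw [e0, e1, e2, hγσ]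
    field_simp
    ring
  rw [key]
  exact div_pos (by linarith [bernoulli_23 hβ0 hβ1 hσ]) (by linarith)

private lemma single_pos {β γ σ : ℝ} (hβ0 : 0 < β) (hβ1 : β < 1) (hγ : γ = β + 1)
    (hσ : σ = (β + 1) / 2) :
    0 < σ^β - ((1+σ)^β - σ^β)
      + 2*(1/γ*((1+σ)^γ - σ^γ) - 1/2*((1+σ)^β + σ^β)) := by
  have hσ0 : (0:ℝ) < σ := by rw [hσ]; linarith
  have hσ1 : σ < 1 := by rw [hσ]; linarith
  have e0 : σ ^ γ = σ ^ β * σ := by rw [hγ, Real.rpow_add_one hσ0.ne']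
  have e1 : (1 + σ) ^ γ = (1 + σ) ^ β * (1 + σ) := by
    rw [hγ, Real.rpow_add_one (by linarith : (1:ℝ) + σ ≠ 0)]
  have hγσ : γ = 2 * σ := by rw [hγ, hσ]; ring
  have key : σ^β - ((1+σ)^β - σ^β)
      + 2*(1/γ*((1+σ)^γ - σ^γ) - 1/2*((1+σ)^β + σ^β))
      = (1+σ)^β * (1 - σ) / σ := by
    rw [e0, e1, hγσ]
    field_simp
    ring
  rw [key]
  exact div_pos (mul_pos (Real.rpow_pos_of_pos (by linarith) _) (by linarith)) hσ0

end L21SigmaAux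

/-- Lemma 4, inequality (4.103) (Alikhanov, L2-1_σ paper): for `0 < α < 1`, `σ = 1 − α/2`
and `j ≥ 1`, the coefficients of the L2-1_σ formula are strictly decreasing:
`c_0^{(α,σ)} > c_1^{(α,σ)} > … > c_j^{(α,σ)}`. -/
theorem c_coeff_strict_decreasing (α σ : ℝ) (hα0 : 0 < α) (hα1 : α < 1)
    (hσ : σ = 1 - α / 2) (j : ℕ) (hj : 1 ≤ j) :
    ∀ s < j, cCoeff α σ j (s + 1) < cCoeff α σ j s := by
  intro s hs
  have hβ0 : (0:ℝ) < 1 - α := by linarith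
  have hβ1 : (1:ℝ) - α < 1 := by linarith
  have hγ : (2:ℝ) - α = (1 - α) + 1 := by ring
  have hσ2 : σ = ((1 - α) + 1) / 2 := by rw [hσ]; ring
  have hσ0 : (0:ℝ) < σ := by rw [hσ]; linarith
  have hj0 : j ≠ 0 := by omega
  have c0 : cCoeff α σ j 0 = aCoeff α σ 0 + bCoeff α σ 1 := by simp [cCoeff, hj0]
  have cmid : ∀ m : ℕ, m ≠ 0 → m < j →
      cCoeff α σ j m = aCoeff α σ m + bCoeff α σ (m + 1) - bCoeff α σ m := by
    intro m h1 h2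
    rw [cCoeff, if_neg hj0, if_neg h1, if_pos h2]
  have clast : cCoeff α σ j j = aCoeff α σ j - bCoeff α σ j := by
    rw [cCoeff, if_neg hj0, if_neg hj0, if_neg (lt_irrefl j)]
  have ha0 : aCoeff α σ 0 = σ ^ (1 - α) := by simp [aCoeff]
  have han : ∀ m : ℕ, m ≠ 0 →
      aCoeff α σ m = ((m:ℝ) + σ) ^ (1 - α) - ((m:ℝ) - 1 + σ) ^ (1 - α) := by
    intro m h1
    rw [aCoeff, if_neg h1]
  rcases Nat.eq_zero_or_pos s with rfl | hs1
  · simp only [Nat.zero_add]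
    rw [c0, ha0]
    by_cases h1j : 1 < j
    · rw [cmid 1 one_ne_zero h1j, han 1 one_ne_zero]
      simp only [bCoeff]
      push_cast
      have H := first_pos (σ := σ) hβ0 hβ1 hγ hσ2
      ring_nf at H ⊢
      linarith
    · have hj1 : j = 1 := by omega
      subst hj1
      rw [clast, han 1 one_ne_zero]
      simp only [bCoeff]
      push_cast
      have H := single_pos (σ := σ) hβ0 hβ1 hγ hσ2
      ring_nf at H ⊢
      linarith
  · have hs0 : s ≠ 0 := by omega
    have hcast : (1:ℝ) ≤ (s:ℝ) := by exact_mod_cast hs1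
    have ht : (0:ℝ) < (s:ℝ) - 1 + σ := by linarith
    rw [cmid s hs0 hs]
    by_cases hsj : s + 1 < j
    · rw [cmid (s+1) (Nat.succ_ne_zero s) hsj, han s hs0, han (s+1) (Nat.succ_ne_zero s)]
      simp only [bCoeff]
      push_cast
      have H := middle_pos hβ0 hβ1 hγ ht
      ring_nf at H ⊢
      linarith
    · have hsj' : s + 1 = j := by omega
      rw [hsj', clast, han j hj0, han s hs0]
      simp only [bCoeff]
      have hjr : (j:ℝ) = (s:ℝ) + 1 := by exact_mod_cast hsj'.symm
      rw [hjr]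
      have H := last_pos hβ0 hβ1 hγ ht
      ring_nf at H ⊢
      linarith
end

section
/- Let 0 < α < 1, σ = 1 − α/2, and j ≥ 1. Then (2σ − 1) c_0^{(α,σ)} − σ c_1^{(α,σ)} > 0. -/
section Helpers

open Set Real


lemma trap_ge_of_convex {f : ℝ → ℝ} {u : ℝ}
    (hf : ConvexOn ℝ (Icc u (u + 1)) f) (hc : ContinuousOn f (Icc u (u + 1))) :
    ∫ t in u..(u + 1), f t ≤ (f u + f (u + 1)) / 2 := by
  have hu1 : u ≤ u + 1 := by linarith
  have hmem : u ∈ Icc u (u+1) := ⟨le_refl _, hu1⟩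
  have hmem1 : u + 1 ∈ Icc u (u+1) := ⟨hu1, le_refl _⟩
  have key : ∫ t in u..(u+1), f t ≤ ∫ t in u..(u+1), ((u + 1 - t) * f u + (t - u) * f (u+1)) := by
    apply intervalIntegral.integral_mono_on hu1
    · exact hc.intervalIntegrable_of_Icc hu1
    · apply ContinuousOn.intervalIntegrable_of_Icc hu1
      fun_prop
    · intro t ht
      have h1 : 0 ≤ u + 1 - t := by linarith [ht.2]
      have h2 : 0 ≤ t - u := by linarith [ht.1]
      have hab : (u + 1 - t) + (t - u) = 1 := by ring
      have := hf.2 hmem hmem1 h1 h2 hab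
      simpa [smul_eq_mul, show (u+1-t) * u + (t-u)*(u+1) = t by ring] using this
  have comp : ∫ t in u..(u+1), ((u + 1 - t) * f u + (t - u) * f (u+1))
      = (f u + f (u + 1)) / 2 := by
    have : ∀ t : ℝ, (u + 1 - t) * f u + (t - u) * f (u+1)
        = ((u+1) * f u - u * f (u+1)) + t * (f (u+1) - f u) := by intro t; ring
    simp only [this]
    rw [intervalIntegral.integral_add (by apply Continuous.intervalIntegrable; fun_prop)
      (by apply Continuous.intervalIntegrable; fun_prop)]
    rw [intervalIntegral.integral_const]
    rw [intervalIntegral.integral_mul_const, integral_id]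
    simp only [smul_eq_mul]
    ring
  linarith

lemma expMul_convex (p : ℝ) : ConvexOn ℝ (univ : Set ℝ) fun y => Real.exp (p * y) := by
  refine ⟨convex_univ, fun x _ y _ a b ha hb hab => ?_⟩
  have := convexOn_exp.2 (mem_univ (p * x)) (mem_univ (p * y)) ha hb hab
  simpa [smul_eq_mul, mul_add, mul_comm, mul_left_comm, mul_assoc] using this

lemma convexOn_rpow_of_nonpos {p : ℝ} (hp : p ≤ 0) :
    ConvexOn ℝ (Ioi (0:ℝ)) fun x : ℝ => x ^ p := by
  have himg : Real.log '' Ioi (0:ℝ) = univ := by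
    apply eq_univ_of_forall
    intro y
    exact ⟨Real.exp y, Real.exp_pos y, Real.log_exp y⟩
  have hg : ConvexOn ℝ (Real.log '' Ioi (0:ℝ)) fun y => Real.exp (p * y) := by
    rw [himg]; exact expMul_convex p
  have hanti : AntitoneOn (fun y => Real.exp (p * y)) (Real.log '' Ioi (0:ℝ)) := by
    intro x _ y _ hxy
    exact Real.exp_le_exp.2 (mul_le_mul_of_nonpos_left hxy hp)
  have hlog : ConcaveOn ℝ (Ioi (0:ℝ)) Real.log := (strictConcaveOn_log_Ioi).concaveOn
  have := hg.comp_concaveOn hlog hanti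
  apply this.congr
  intro x hx
  simp only [Function.comp]
  rw [Real.rpow_def_of_pos hx, mul_comm]

lemma contInt {c q : ℝ} (hc : 0 < c) :
    IntervalIntegrable (fun r : ℝ => (c + r) ^ q) MeasureTheory.volume 0 1 := by
  apply ContinuousOn.intervalIntegrable_of_Icc zero_le_one
  apply ContinuousOn.rpow_const (by fun_prop)
  intro r hr
  exact Or.inl (by nlinarith [hr.1])

lemma diff_rep {β : ℝ} (hβ0 : 0 < β) {t : ℝ} (ht : 0 < t) :
    (t + 1) ^ β - t ^ β = β * ∫ r in (0:ℝ)..1, (t + r) ^ (β - 1) := by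
  have h1 : ∫ r in (0:ℝ)..1, (t + r) ^ (β - 1) = ∫ s in t..(t+1), s ^ (β - 1) := by
    have := intervalIntegral.integral_comp_add_left (a := (0:ℝ)) (b := 1) (fun s => s ^ (β - 1)) t
    simpa using this
  rw [h1, integral_rpow (Or.inl (by linarith))]
  have : β - 1 + 1 = β := by ring
  rw [this]
  field_simp

lemma convexOn_diff {β : ℝ} (hβ0 : 0 < β) (hβ1 : β < 1) :
    ConvexOn ℝ (Ioi (0:ℝ)) fun t : ℝ => (t + 1) ^ β - t ^ β := by
  refine ⟨convex_Ioi 0, fun x hx y hy a b ha hb hab => ?_⟩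
  simp only [smul_eq_mul]
  have hx' : (0:ℝ) < x := hx
  have hy' : (0:ℝ) < y := hy
  have hz : (0:ℝ) < a * x + b * y := by
    have hm : 0 < min x y := lt_min hx' hy'
    nlinarith [mul_le_mul_of_nonneg_left (min_le_left x y) ha,
      mul_le_mul_of_nonneg_left (min_le_right x y) hb]
  rw [diff_rep hβ0 hz, diff_rep hβ0 hx', diff_rep hβ0 hy']
  have hmono : ∫ r in (0:ℝ)..1, (a * x + b * y + r) ^ (β - 1)
      ≤ ∫ r in (0:ℝ)..1, (a * ((x + r) ^ (β - 1)) + b * ((y + r) ^ (β - 1))) := by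
    apply intervalIntegral.integral_mono_on zero_le_one (contInt hz)
    · exact ((contInt hx').const_mul a).add ((contInt hy').const_mul b)
    · intro r hr
      have h1 : x + r ∈ Ioi (0:ℝ) := by simp only [mem_Ioi]; nlinarith [hr.1]
      have h2 : y + r ∈ Ioi (0:ℝ) := by simp only [mem_Ioi]; nlinarith [hr.1]
      have := (convexOn_rpow_of_nonpos (by linarith : β - 1 ≤ 0)).2 h1 h2 ha hb hab
      simp only [smul_eq_mul] at this
      have harg : a * (x + r) + b * (y + r) = a * x + b * y + r := by
        have h3 : a * (x + r) + b * (y + r) = a * x + b * y + (a + b) * r := by ring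
        rw [h3, hab]; ring
      rw [harg] at this
      exact this
  have hsplit : ∫ r in (0:ℝ)..1, (a * ((x + r) ^ (β - 1)) + b * ((y + r) ^ (β - 1)))
      = (a * ∫ r in (0:ℝ)..1, (x + r) ^ (β - 1)) + b * ∫ r in (0:ℝ)..1, (y + r) ^ (β - 1) := by
    rw [intervalIntegral.integral_add ((contInt hx').const_mul a) ((contInt hy').const_mul b)]
    have e1 : ∫ r in (0:ℝ)..1, a * ((x + r) ^ (β - 1)) = a * ∫ r in (0:ℝ)..1, (x + r) ^ (β - 1) := by
      simpa [smul_eq_mul] using intervalIntegral.integral_smul (𝕜 := ℝ) a (fun r => (x + r) ^ (β - 1))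
    have e2 : ∫ r in (0:ℝ)..1, b * ((y + r) ^ (β - 1)) = b * ∫ r in (0:ℝ)..1, (y + r) ^ (β - 1) := by
      simpa [smul_eq_mul] using intervalIntegral.integral_smul (𝕜 := ℝ) b (fun r => (y + r) ^ (β - 1))
    rw [e1, e2]
  have hfin := mul_le_mul_of_nonneg_left (le_of_le_of_eq hmono hsplit) hβ0.le
  nlinarith [hfin]

lemma contOn_rpow {q : ℝ} {u v : ℝ} (hu : 0 < u) :
    ContinuousOn (fun t : ℝ => t ^ q) (Icc u v) := by
  apply ContinuousOn.rpow_const (by fun_prop)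
  intro t ht
  exact Or.inl (by nlinarith [ht.1])

lemma int_rpow_eval {β u : ℝ} (hβ0 : 0 < β) (hu : 0 < u) :
    ∫ t in u..(u+1), t ^ β = ((u+1) ^ (β+1) - u ^ (β+1)) / (β+1) := by
  rw [integral_rpow (Or.inl (by linarith))]

lemma b1_nonneg {β u : ℝ} (hβ0 : 0 < β) (hβ1 : β < 1) (hu : 0 < u) :
    (1/2) * ((u+1)^β + u^β) ≤ (1/(β+1)) * ((u+1)^(β+1) - u^(β+1)) := by
  have hconc : ConcaveOn ℝ (Icc u (u+1)) fun t : ℝ => t ^ β :=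
    (Real.concaveOn_rpow hβ0.le hβ1.le).subset
      (fun t ht => le_trans hu.le ht.1) (convex_Icc _ _)
  have hconv : ConvexOn ℝ (Icc u (u+1)) fun t : ℝ => -(t ^ β) := hconc.neg
  have hcont : ContinuousOn (fun t : ℝ => -(t ^ β)) (Icc u (u+1)) := (contOn_rpow hu).neg
  have htrap := trap_ge_of_convex hconv hcont
  have hint : ∫ t in u..(u+1), -(t ^ β) = -∫ t in u..(u+1), t ^ β :=
    intervalIntegral.integral_neg
  rw [hint] at htrap
  rw [int_rpow_eval hβ0 hu] at htrap
  ring_nf at htrap ⊢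
  linarith [htrap]

lemma b_mono {β u : ℝ} (hβ0 : 0 < β) (hβ1 : β < 1) (hu : 0 < u) :
    (1/(β+1)) * ((u+2)^(β+1) - (u+1)^(β+1)) - (1/2) * ((u+2)^β + (u+1)^β)
      ≤ (1/(β+1)) * ((u+1)^(β+1) - u^(β+1)) - (1/2) * ((u+1)^β + u^β) := by
  have hu1 : (0:ℝ) < u + 1 := by linarith
  have hconv : ConvexOn ℝ (Icc u (u+1)) fun t : ℝ => (t+1)^β - t^β :=
    (convexOn_diff hβ0 hβ1).subset (fun t ht => lt_of_lt_of_le hu ht.1) (convex_Icc _ _)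
  have hcont : ContinuousOn (fun t : ℝ => (t+1)^β - t^β) (Icc u (u+1)) := by
    apply ContinuousOn.sub
    · apply ContinuousOn.rpow_const (by fun_prop)
      intro t ht; exact Or.inl (by nlinarith [ht.1])
    · exact contOn_rpow hu
  have htrap := trap_ge_of_convex hconv hcont
  have hint1 : IntervalIntegrable (fun t : ℝ => (t+1)^β) MeasureTheory.volume u (u+1) := by
    apply ContinuousOn.intervalIntegrable_of_Icc (by linarith)
    apply ContinuousOn.rpow_const (by fun_prop)
    intro t ht; exact Or.inl (by nlinarith [ht.1])
  have hint2 : IntervalIntegrable (fun t : ℝ => t^β) MeasureTheory.volume u (u+1) :=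
    (contOn_rpow hu).intervalIntegrable_of_Icc (by linarith)
  rw [intervalIntegral.integral_sub hint1 hint2] at htrap
  have hshift : ∫ t in u..(u+1), (t+1)^β = ∫ s in (u+1)..(u+2), s^β := by
    have := intervalIntegral.integral_comp_add_right (a := u) (b := u+1) (fun s => s ^ β) 1
    simpa [show u + 1 + 1 = u + 2 by ring] using this
  rw [hshift] at htrap
  have he1 : ∫ s in (u+1)..(u+2), s^β = ((u+2) ^ (β+1) - (u+1) ^ (β+1)) / (β+1) := by
    have := int_rpow_eval hβ0 hu1 (u := u+1)
    simpa [show u + 1 + 1 = u + 2 by ring] using this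
  rw [he1, int_rpow_eval hβ0 hu] at htrap
  rw [show u+1+1 = (u+2:ℝ) by ring] at htrap
  ring_nf at htrap ⊢
  linarith [htrap]

end Helpers

set_option maxHeartbeats 2000000

/-- Lemma 4, inequality (4.104) (Alikhanov, L2-1_σ paper): for `0 < α < 1`, `σ = 1 − α/2`
and `j ≥ 1`, one has `(2σ − 1) c_0^{(α,σ)} − σ c_1^{(α,σ)} > 0`. -/


theorem c_coeff_sigma_inequality (α σ : ℝ) (hα0 : 0 < α) (hα1 : α < 1)
    (hσ : σ = 1 - α / 2) (j : ℕ) (hj : 1 ≤ j) :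
    (2 * σ - 1) * cCoeff α σ j 0 - σ * cCoeff α σ j 1 > 0 := by
  have hβ0 : 0 < 1 - α := by linarith
  have hβ1 : 1 - α < 1 := by linarith
  set β : ℝ := 1 - α with hβ
  have hσval : σ = (1 + β) / 2 := by rw [hσ, hβ]; ring
  have hσpos : 0 < σ := by rw [hσval]; linarith
  have hσ1pos : 0 < σ + 1 := by linarith
  have h2α : 2 - α = β + 1 := by rw [hβ]; ring
  have hσl : 2 * σ = β + 1 := by rw [hσval]; ring
  have hj0 : j ≠ 0 := by omega
  have hX : (0:ℝ) < σ ^ β := Real.rpow_pos_of_pos hσpos β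
  have hY : (0:ℝ) < (σ + 1) ^ β := Real.rpow_pos_of_pos hσ1pos β
  -- closed forms for the coefficients
  have hb1 : bCoeff α σ 1
      = (1/(β+1)) * ((σ+1)^(β+1) - σ^(β+1)) - (1/2) * ((σ+1)^β + σ^β) := by
    simp only [bCoeff, Nat.cast_one]
    rw [show (1:ℝ) - 1 + σ = σ by ring, show (1:ℝ) + σ = σ + 1 by ring, h2α]
  have hb2 : bCoeff α σ 2
      = (1/(β+1)) * ((σ+2)^(β+1) - (σ+1)^(β+1)) - (1/2) * ((σ+2)^β + (σ+1)^β) := by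
    simp only [bCoeff, Nat.cast_ofNat]
    rw [show (2:ℝ) - 1 + σ = σ + 1 by ring, show (2:ℝ) + σ = σ + 2 by ring, h2α]
  have ha0 : aCoeff α σ 0 = σ ^ β := by simp [aCoeff, hβ]
  have ha1 : aCoeff α σ 1 = (σ+1)^β - σ^β := by
    simp only [aCoeff, Nat.cast_one, one_ne_zero, if_false]
    rw [show (1:ℝ) - 1 + σ = σ by ring, show (1:ℝ) + σ = σ + 1 by ring]
  -- properties of the b coefficients
  have hb1nn : 0 ≤ bCoeff α σ 1 := by
    rw [hb1]; linarith [b1_nonneg hβ0 hβ1 hσpos]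
  have hb21 : bCoeff α σ 2 ≤ bCoeff α σ 1 := by
    rw [hb1, hb2]; linarith [b_mono hβ0 hβ1 hσpos]
  -- Bernoulli estimate:  σ * (σ+1)^β ≤ (σ + β) * σ^β
  have hW' : σ * (σ+1)^β ≤ (σ + β) * σ^β := by
    have h1 : σ + 1 = σ * (1 + 1/σ) := by field_simp
    have h2 : (σ * (1 + 1/σ))^β = σ^β * (1 + 1/σ)^β :=
      Real.mul_rpow hσpos.le (by positivity)
    have h3 : (1 + 1/σ)^β ≤ 1 + β * (1/σ) := by
      apply rpow_one_add_le_one_add_mul_self ?_ hβ0.le hβ1.le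
      have : 0 < 1/σ := by positivity
      linarith
    have h4 : (σ+1)^β ≤ σ^β * (1 + β * (1/σ)) := by
      rw [h1, h2]
      exact mul_le_mul_of_nonneg_left h3 hX.le
    have h5 := mul_le_mul_of_nonneg_left h4 hσpos.le
    calc σ * (σ+1)^β ≤ σ * (σ^β * (1 + β * (1/σ))) := h5
      _ = (σ + β) * σ^β := by field_simp
  -- the key strict inequality F > 0
  have hF : 0 < β * (σ^β) + β * bCoeff α σ 1 - σ * ((σ+1)^β - σ^β) := by
    rw [hb1]
    have hP : σ^(β+1) = σ * σ^β := by
      rw [Real.rpow_add hσpos, Real.rpow_one]; ring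
    have hQ : (σ+1)^(β+1) = (σ+1) * (σ+1)^β := by
      rw [Real.rpow_add hσ1pos, Real.rpow_one]; ring
    rw [hP, hQ, ← hσl]
    have hσlt1 : σ < 1 := by rw [hσval]; linarith
    have h2σpos : (0:ℝ) < 2 * σ := by linarith
    have hbig : 0 < (2*σ) * (β * (σ^β)
        + β * ((1/(2*σ)) * ((σ+1) * (σ+1)^β - σ * σ^β) - (1/2) * ((σ+1)^β + σ^β))
        - σ * ((σ+1)^β - σ^β)) := by
      have hexp : (2*σ) * (β * (σ^β)
          + β * ((1/(2*σ)) * ((σ+1) * (σ+1)^β - σ * σ^β) - (1/2) * ((σ+1)^β + σ^β))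
          - σ * ((σ+1)^β - σ^β))
          = 2*σ^2 * (σ^β) + (β - 2*σ^2) * ((σ+1)^β) := by
        field_simp
        ring
      rw [hexp]
      rcases le_or_gt (2*σ^2 - β) 0 with hcase | hcase
      · nlinarith [mul_pos (mul_pos hσpos hσpos) hX, mul_nonneg (by linarith : (0:ℝ) ≤ β - 2*σ^2) hY.le]
      · have hkey := mul_le_mul_of_nonneg_left hW' hcase.le
        have e2 : 2*σ^3*(σ^β) - (2*σ^2-β)*((σ+β)*(σ^β)) = β^2*(1-σ)*(σ^β) := by
          linear_combination (-β*σ*(σ^β)) * hσl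
        have e3 : 0 < β^2*(1-σ)*(σ^β) :=
          mul_pos (mul_pos (pow_pos hβ0 2) (by linarith)) hX
        have e4 : 0 < σ * (2*σ^2 * (σ^β) + (β - 2*σ^2) * ((σ+1)^β)) := by
          nlinarith [hkey, e2, e3]
        nlinarith [e4, hσpos]
    by_contra hcon
    push_neg at hcon
    nlinarith [mul_nonpos_of_nonneg_of_nonpos h2σpos.le hcon, hbig]
  have h2σβ : 2 * σ - 1 = β := by rw [hσval]; ring
  -- unfold cCoeff
  have hc0 : cCoeff α σ j 0 = σ^β + bCoeff α σ 1 := by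
    simp [cCoeff, hj0, ha0]
  rcases eq_or_lt_of_le hj with hj1 | hj2
  · -- j = 1
    have hc1 : cCoeff α σ j 1 = ((σ+1)^β - σ^β) - bCoeff α σ 1 := by
      simp [cCoeff, hj0, ← hj1, ha1]
    rw [hc0, hc1, h2σβ]
    have := mul_nonneg hσpos.le hb1nn
    nlinarith [hF, this]
  · -- j ≥ 2
    have hc1 : cCoeff α σ j 1 = ((σ+1)^β - σ^β) + bCoeff α σ 2 - bCoeff α σ 1 := by
      simp [cCoeff, hj0, hj2, ha1]
    rw [hc0, hc1, h2σβ]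
    have := mul_nonneg hσpos.le (sub_nonneg.2 hb21)
    nlinarith [hF, this]
end

section
/- Let 0 < α < 1, τ > 0, σ > 0, j ≥ 0, and set t_j = jτ, t_{j+1/2} = (j + 1/2)τ, t_{j+σ} = (j+σ)τ. Then ∫_{t_j}^{t_{j+σ}} (η − t_{j+1/2}) (t_{j+σ} − η)^{−α} dη = τ^{2−α} σ^{1−α} (2σ + α − 2) / (2 (1−α) (2−α)). In particular, if σ = 1 − α/2, this integral equals zero. -/
/-- The last-interval moment integral (Alikhanov, L2-1_σ paper): for `0 < α < 1`, `τ > 0`,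
`σ > 0`, `j ≥ 0`, with `t_k = kτ`,
`∫_{t_j}^{t_{j+σ}} (η − t_{j+1/2})(t_{j+σ} − η)^{−α} dη
  = τ^{2−α} σ^{1−α} (2σ + α − 2)/(2(1−α)(2−α))`,
which vanishes when `σ = 1 − α/2`. -/
theorem integral_last_interval (α σ τ : ℝ) (hα0 : 0 < α) (hα1 : α < 1)
    (hσ : 0 < σ) (hτ : 0 < τ) (j : ℕ) :
    (∫ η in ((j : ℝ) * τ)..(((j : ℝ) + σ) * τ),
        (η - ((j : ℝ) + 1 / 2) * τ) * (((j : ℝ) + σ) * τ - η) ^ (-α)) =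
      τ ^ (2 - α) * σ ^ (1 - α) * (2 * σ + α - 2) / (2 * (1 - α) * (2 - α)) ∧
    (σ = 1 - α / 2 →
      (∫ η in ((j : ℝ) * τ)..(((j : ℝ) + σ) * τ),
          (η - ((j : ℝ) + 1 / 2) * τ) * (((j : ℝ) + σ) * τ - η) ^ (-α)) = 0) := by
  have h1 : (1:ℝ) - α ≠ 0 := by linarith
  have h2 : (2:ℝ) - α ≠ 0 := by linarith
  set a := (j:ℝ) * τ with ha
  set b := ((j:ℝ) + σ) * τ with hb
  set c := ((j:ℝ) + 1/2) * τ with hc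
  have hba : b - a = σ * τ := by rw [ha, hb]; ring
  have hbc : b - c = (σ - 1/2) * τ := by rw [hb, hc]; ring
  have hL : (0:ℝ) < σ * τ := mul_pos hσ hτ
  -- substitution x = b - η
  have step1 : (∫ η in a..b, (η - c) * (b - η) ^ (-α))
      = ∫ x in (0:ℝ)..(σ * τ), (b - c - x) * x ^ (-α) := by
    have h := intervalIntegral.integral_comp_sub_left (a := a) (b := b)
      (fun x => (b - c - x) * x ^ (-α)) b
    simp only [sub_self] at h
    rw [hba] at h
    rw [← h]
    congr 1
    funext η
    ring_nf
  -- split the integrand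
  have step2 : (∫ x in (0:ℝ)..(σ * τ), (b - c - x) * x ^ (-α))
      = (b - c) * ((σ*τ) ^ (1 - α) / (1 - α)) - (σ*τ) ^ (2 - α) / (2 - α) := by
    have hi1 : IntervalIntegrable (fun x : ℝ => x ^ (-α)) MeasureTheory.volume 0 (σ*τ) :=
      intervalIntegral.intervalIntegrable_rpow' (by linarith)
    have hi2 : IntervalIntegrable (fun x : ℝ => x ^ (1 - α)) MeasureTheory.volume 0 (σ*τ) :=
      intervalIntegral.intervalIntegrable_rpow' (by linarith)
    have hcongr : ∀ x ∈ Set.uIcc (0:ℝ) (σ*τ),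
        (b - c - x) * x ^ (-α) = (b - c) * x ^ (-α) - x ^ (1 - α) := by
      intro x hx
      have hx0 : 0 ≤ x := by
        rcases Set.mem_uIcc.1 hx with h | h
        · exact h.1
        · linarith [h.1, hL.le]
      have : x ^ (1 - α) = x ^ (1:ℝ) * x ^ (-α) := by
        rw [← Real.rpow_add' hx0 (by norm_num; linarith)]
        congr 1 <;> ring
      rw [this, Real.rpow_one]
      ring
    rw [intervalIntegral.integral_congr hcongr,
      intervalIntegral.integral_sub (hi1.const_mul _) hi2,
      intervalIntegral.integral_const_mul,
      integral_rpow (Or.inl (by linarith)),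
      integral_rpow (Or.inl (by linarith))]
    rw [Real.zero_rpow (by linarith : -α + 1 ≠ 0),
      Real.zero_rpow (by norm_num; linarith : (1:ℝ) - α + 1 ≠ 0)]
    have e1 : -α + 1 = 1 - α := by ring
    have e2 : (1:ℝ) - α + 1 = 2 - α := by ring
    rw [e1, e2]
    ring
  have hmul1 : (σ*τ) ^ (1 - α) = σ ^ (1-α) * τ ^ (1-α) :=
    Real.mul_rpow hσ.le hτ.le
  have hmul2 : (σ*τ) ^ (2 - α) = σ ^ (2-α) * τ ^ (2-α) :=
    Real.mul_rpow hσ.le hτ.le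
  have hs2 : σ ^ ((2:ℝ)-α) = σ ^ ((1:ℝ)-α) * σ := by
    rw [← Real.rpow_add_one hσ.ne']; congr 1 <;> ring
  have ht2 : τ ^ ((2:ℝ)-α) = τ ^ ((1:ℝ)-α) * τ := by
    rw [← Real.rpow_add_one hτ.ne']; congr 1 <;> ring
  have key : (∫ η in a..b, (η - c) * (b - η) ^ (-α))
      = τ ^ (2 - α) * σ ^ (1 - α) * (2 * σ + α - 2) / (2 * (1 - α) * (2 - α)) := by
    rw [step1, step2, hbc, hmul1, hmul2, hs2, ht2]
    field_simp
    ring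
  refine ⟨key, fun hσ' => ?_⟩
  rw [key, hσ']
  have : 2 * (1 - α/2) + α - 2 = 0 := by ring
  rw [this]
  ring
end

section
/- Let N ≥ 2, h > 0, and let y = (y_0, …, y_N) be a real grid function with y_0 = y_N = 0. Define (H_h y)_i = (y_{i−1} + 10 y_i + y_{i+1})/12 for i = 1, …, N−1, and the norm ‖v‖₀² = Σ_{i=1}^{N−1} v_i² h. Then (5/12) ‖y‖₀² ≤ ‖H_h y‖₀² ≤ ‖y‖₀². -/
/-- Norm equivalence for the compact operator `H_h` (Alikhanov, L2-1_σ paper): for a grid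
function `y` vanishing at `i = 0` and `i = N`, with `(H_h y)_i = (y_{i−1} + 10 y_i + y_{i+1})/12`,
one has `(5/12) ‖y‖₀² ≤ ‖H_h y‖₀² ≤ ‖y‖₀²`. -/
theorem compact_norm_equivalence (N : ℕ) (h : ℝ) (hN : 2 ≤ N) (hh : 0 < h)
    (y : ℕ → ℝ) (hy0 : y 0 = 0) (hyN : y N = 0) :
    (5 / 12) * (∑ i ∈ Finset.Ico 1 N, (y i) ^ 2 * h) ≤
        (∑ i ∈ Finset.Ico 1 N, ((y (i - 1) + 10 * y i + y (i + 1)) / 12) ^ 2 * h) ∧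
      (∑ i ∈ Finset.Ico 1 N, ((y (i - 1) + 10 * y i + y (i + 1)) / 12) ^ 2 * h) ≤
        ∑ i ∈ Finset.Ico 1 N, (y i) ^ 2 * h := by
  set S := ∑ i ∈ Finset.Ico 1 N, (y i) ^ 2 with hS
  -- shifted sums
  have hA : ∑ i ∈ Finset.Ico 1 N, y (i - 1) ^ 2 ≤ S := by
    have h1 : ∑ i ∈ Finset.Ico 1 N, y (i - 1) ^ 2
        = ∑ i ∈ Finset.Ico 0 (N - 1), y i ^ 2 := by
      rw [Finset.sum_Ico_eq_sum_range, Finset.sum_Ico_eq_sum_range]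
      refine Finset.sum_congr rfl fun i _ => by norm_num
    have h2 : ∑ i ∈ Finset.Ico 0 (N - 1), y i ^ 2
        = ∑ i ∈ Finset.Ico 1 (N - 1), y i ^ 2 := by
      rw [Finset.sum_eq_sum_Ico_succ_bot (by omega : 0 < N - 1)]
      simp [hy0]
    rw [h1, h2]
    refine Finset.sum_le_sum_of_subset_of_nonneg ?_ (fun i _ _ => sq_nonneg _)
    exact Finset.Ico_subset_Ico le_rfl (by omega)
  have hB : ∑ i ∈ Finset.Ico 1 N, y (i + 1) ^ 2 ≤ S := by
    have h1 : ∑ i ∈ Finset.Ico 1 N, y (i + 1) ^ 2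
        = ∑ i ∈ Finset.Ico 2 (N + 1), y i ^ 2 := by
      rw [Finset.sum_Ico_eq_sum_range, Finset.sum_Ico_eq_sum_range]
      have : N + 1 - 2 = N - 1 := by omega
      rw [this]
      refine Finset.sum_congr rfl fun i _ => by ring_nf
    have h2 : ∑ i ∈ Finset.Ico 2 (N + 1), y i ^ 2
        = ∑ i ∈ Finset.Ico 2 N, y i ^ 2 := by
      rw [Finset.sum_Ico_succ_top (by omega : 2 ≤ N)]
      simp [hyN]
    rw [h1, h2]
    refine Finset.sum_le_sum_of_subset_of_nonneg ?_ (fun i _ _ => sq_nonneg _)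
    exact Finset.Ico_subset_Ico (by omega) le_rfl
  -- expanded middle sums
  have hmid_up : ∑ i ∈ Finset.Ico 1 N, (y (i - 1) ^ 2 + 10 * y i ^ 2 + y (i + 1) ^ 2) / 12
      = ((∑ i ∈ Finset.Ico 1 N, y (i - 1) ^ 2) + 10 * S
          + ∑ i ∈ Finset.Ico 1 N, y (i + 1) ^ 2) / 12 := by
    rw [← Finset.sum_div, Finset.sum_add_distrib, Finset.sum_add_distrib, ← Finset.mul_sum]
  have hmid_lo : ∑ i ∈ Finset.Ico 1 N, (80 * y i ^ 2 - 10 * y (i - 1) ^ 2 - 10 * y (i + 1) ^ 2) / 144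
      = (80 * S - 10 * (∑ i ∈ Finset.Ico 1 N, y (i - 1) ^ 2)
          - 10 * ∑ i ∈ Finset.Ico 1 N, y (i + 1) ^ 2) / 144 := by
    rw [← Finset.sum_div, Finset.sum_sub_distrib, Finset.sum_sub_distrib, ← Finset.mul_sum,
      ← Finset.mul_sum, ← Finset.mul_sum]
  -- core inequalities without h
  have up : ∑ i ∈ Finset.Ico 1 N, ((y (i - 1) + 10 * y i + y (i + 1)) / 12) ^ 2 ≤ S := by
    calc ∑ i ∈ Finset.Ico 1 N, ((y (i - 1) + 10 * y i + y (i + 1)) / 12) ^ 2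
        ≤ ∑ i ∈ Finset.Ico 1 N, (y (i - 1) ^ 2 + 10 * y i ^ 2 + y (i + 1) ^ 2) / 12 := by
          refine Finset.sum_le_sum fun i _ => ?_
          nlinarith [sq_nonneg (y (i - 1) - y i), sq_nonneg (y i - y (i + 1)),
            sq_nonneg (y (i - 1) - y (i + 1))]
      _ ≤ S := by rw [hmid_up]; linarith
  have lo : (5 / 12) * S ≤ ∑ i ∈ Finset.Ico 1 N, ((y (i - 1) + 10 * y i + y (i + 1)) / 12) ^ 2 := by
    calc (5 / 12) * S
        ≤ ∑ i ∈ Finset.Ico 1 N, (80 * y i ^ 2 - 10 * y (i - 1) ^ 2 - 10 * y (i + 1) ^ 2) / 144 := by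
          rw [hmid_lo]; linarith
      _ ≤ ∑ i ∈ Finset.Ico 1 N, ((y (i - 1) + 10 * y i + y (i + 1)) / 12) ^ 2 := by
          refine Finset.sum_le_sum fun i _ => ?_
          nlinarith [sq_nonneg (y (i - 1) + y i), sq_nonneg (y i + y (i + 1)),
            sq_nonneg (y (i - 1) + y (i + 1))]
  have e1 : ∑ i ∈ Finset.Ico 1 N, (y i) ^ 2 * h = S * h := (Finset.sum_mul ..).symm
  have e2 : ∑ i ∈ Finset.Ico 1 N, ((y (i - 1) + 10 * y i + y (i + 1)) / 12) ^ 2 * h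
      = (∑ i ∈ Finset.Ico 1 N, ((y (i - 1) + 10 * y i + y (i + 1)) / 12) ^ 2) * h :=
    (Finset.sum_mul ..).symm
  constructor
  · rw [e1, e2, ← mul_assoc]
    exact mul_le_mul_of_nonneg_right lo hh.le
  · rw [e1, e2]
    exact mul_le_mul_of_nonneg_right up hh.le
end

section
/- Let N ≥ 2, h > 0, and let v = (v_0, …, v_N) be a real grid function with v_0 = v_N = 0. Define the second difference v_{x̄x,i} = (v_{i+1} − 2v_i + v_{i−1})/h², the backward difference v_{x̄,i} = (v_i − v_{i−1})/h, the operator (H_h v)_i = v_i + (h²/12) v_{x̄x,i}, the inner product (y, w) = Σ_{i=1}^{N−1} y_i w_i h, and ‖v_x̄]|₀² = Σ_{i=1}^{N} v_{x̄,i}² h. Then −(H_h v, v_{x̄x}) ≥ (2/3) ‖v_x̄]|₀², where v_{x̄x} denotes the grid function (v_{x̄x,i})_{i=1}^{N−1}. -/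
/-- Coercivity estimate for the compact operator (Alikhanov, L2-1_σ paper, proof of
Theorem 4): for a grid function `v` vanishing at `i = 0` and `i = N`, with
`(H_h v)_i = v_i + (h²/12) v_{x̄x,i}` and `v_{x̄x,i} = (v_{i+1} − 2v_i + v_{i−1})/h²`,
one has `−(H_h v, v_{x̄x}) ≥ (2/3) ‖v_x̄]|₀²`. -/
theorem compact_coercivity (N : ℕ) (h : ℝ) (hN : 2 ≤ N) (hh : 0 < h)
    (v : ℕ → ℝ) (hv0 : v 0 = 0) (hvN : v N = 0) :
    -(∑ i ∈ Finset.Ico 1 N,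
        (v i + (h ^ 2 / 12) * ((v (i + 1) - 2 * v i + v (i - 1)) / h ^ 2)) *
          ((v (i + 1) - 2 * v i + v (i - 1)) / h ^ 2) * h) ≥
      (2 / 3) * ∑ i ∈ Finset.Icc 1 N, ((v i - v (i - 1)) / h) ^ 2 * h := by
  have hh' : h ≠ 0 := ne_of_gt hh
  set a : ℕ → ℝ := fun i => v i - v (i - 1) with ha
  have han : ∀ i : ℕ, a (i + 1) = v (i + 1) - v i := by intro i; simp [ha]
  -- Abel summation (telescoping) identity
  have abel : ∀ M : ℕ, 1 ≤ M →
      ∑ i ∈ Finset.Ico 1 M, v i * (a (i + 1) - a i)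
        + ∑ i ∈ Finset.Icc 1 M, (a i) ^ 2 = v M * a M - v 0 * a 1 := by
    intro M hM
    induction M, hM using Nat.le_induction with
    | base => simp [ha]; ring
    | succ n hn ih =>
      rw [Finset.sum_Ico_succ_top (by omega), Finset.sum_Icc_succ_top (by omega)]
      have h1 := han n
      linear_combination ih + a (n + 1) * h1
  -- bound on the sum of squared differences
  have bound : ∀ M : ℕ, 1 ≤ M →
      ∑ i ∈ Finset.Ico 1 M, (a (i + 1) - a i) ^ 2 + 2 * (a M) ^ 2
        ≤ 4 * ∑ i ∈ Finset.Icc 1 M, (a i) ^ 2 := by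
    intro M hM
    induction M, hM using Nat.le_induction with
    | base => simp; nlinarith [sq_nonneg (a 1)]
    | succ n hn ih =>
      rw [Finset.sum_Ico_succ_top (by omega), Finset.sum_Icc_succ_top (by omega)]
      nlinarith [ih, sq_nonneg (a (n + 1) + a n)]
  -- rewrite the left-hand side sum
  have lhs_eq : ∑ i ∈ Finset.Ico 1 N,
      (v i + (h ^ 2 / 12) * ((v (i + 1) - 2 * v i + v (i - 1)) / h ^ 2)) *
        ((v (i + 1) - 2 * v i + v (i - 1)) / h ^ 2) * h
      = (1 / h) * ∑ i ∈ Finset.Ico 1 N, v i * (a (i + 1) - a i)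
        + (1 / (12 * h)) * ∑ i ∈ Finset.Ico 1 N, (a (i + 1) - a i) ^ 2 := by
    rw [Finset.mul_sum, Finset.mul_sum, ← Finset.sum_add_distrib]
    refine Finset.sum_congr rfl fun i hi => ?_
    have hd : v (i + 1) - 2 * v i + v (i - 1) = a (i + 1) - a i := by
      rw [han]; simp [ha]; ring
    rw [hd]
    field_simp
  -- rewrite the right-hand side sum
  have rhs_eq : ∑ i ∈ Finset.Icc 1 N, ((v i - v (i - 1)) / h) ^ 2 * h
      = (1 / h) * ∑ i ∈ Finset.Icc 1 N, (a i) ^ 2 := by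
    rw [Finset.mul_sum]
    refine Finset.sum_congr rfl fun i hi => ?_
    simp only [ha]
    field_simp
  have habel := abel N (by omega)
  rw [hv0, hvN] at habel
  simp only [zero_mul, mul_zero, sub_zero, zero_sub] at habel
  set S := ∑ i ∈ Finset.Icc 1 N, (a i) ^ 2 with hS
  set T := ∑ i ∈ Finset.Ico 1 N, (a (i + 1) - a i) ^ 2 with hT
  have hSv : ∑ i ∈ Finset.Ico 1 N, v i * (a (i + 1) - a i) = -S := by linarith
  have hbd := bound N (by omega)
  have hTle : T ≤ 4 * S := by nlinarith [sq_nonneg (a N)]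
  rw [lhs_eq, rhs_eq, hSv, ge_iff_le, ← sub_nonneg]
  have key : -((1 / h) * (-S) + (1 / (12 * h)) * T) - 2 / 3 * ((1 / h) * S)
      = (4 * S - T) / (12 * h) := by field_simp; ring
  rw [key]
  apply div_nonneg (by linarith) (by linarith)
end
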